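/- arXiv:1505.07437 — 8 statements merged into one kernel-verified Lean document; each statement's English description precedes it below -/
import Mathlib

section
/- Let k ≥ 2 be an integer and let T = T_k be the unique formal power series over ℚ with constant coefficient 0 satisfying T = X + T^k/k!. Then for all integers ℓ ≥ 1 and n ≥ 1 such that n − ℓ = s(k−1) for a nonnegative integer s, the coefficient of X^n in T^ℓ equals (ℓ/(s(k−1)+ℓ)) · C(ks+ℓ−1, s) · (1/k!)^s, where C(·,·) denotes a binomial coefficient. -/
open PowerSeries

lemma phylo_aux (dq sq lq A B : ℚ) (hsq : 0 ≤ sq) (hdq : 0 ≤ dq) (hlq : 0 ≤ lq)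
    (h1 : A * (sq+1) = B * ((sq+1)*(dq+1)+lq)) :
    lq/((sq+1)*(dq+1)+lq) * A + (lq+dq+2)/((sq+1)*(dq+1)+lq+1) * B
      = (lq+1)/((sq+1)*(dq+1)+lq+1) * (B+A) := by
  have h0 : (sq+1)*(dq+1)+lq ≠ 0 := by positivity
  have h0' : (sq+1)*(dq+1)+lq+1 ≠ 0 := by positivity
  rw [div_mul_eq_mul_div, div_mul_eq_mul_div, div_mul_eq_mul_div, div_add_div _ _ h0 h0',
    div_eq_div_iff (mul_ne_zero h0 h0') h0']
  linear_combination (-(dq+1) * ((sq+1)*(dq+1)+lq+1)) * h1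

/-- Let `k ≥ 2` and let `T` be the unique power series over `ℚ` with constant
coefficient `0` satisfying `T = X + T^k/k!`. For `ℓ ≥ 1`, `n ≥ 1` with
`n - ℓ = s(k-1)` for a nonnegative integer `s`, the coefficient of `X^n` in `T^ℓ`
equals `(ℓ/(s(k-1)+ℓ)) · C(ks+ℓ-1, s) · (1/k!)^s`. -/
theorem phylo_coeff_pow (k : ℕ) (hk : 2 ≤ k) (T : PowerSeries ℚ)
    (hT0 : constantCoeff T = 0)
    (hT : T = X + C ((k.factorial : ℚ))⁻¹ * T ^ k)
    (ℓ n s : ℕ) (hℓ : 1 ≤ ℓ) (hn : 1 ≤ n)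
    (hns : n = s * (k - 1) + ℓ) :
    coeff n (T ^ ℓ) =
      ((ℓ : ℚ) / (s * (k - 1) + ℓ)) * ((k * s + ℓ - 1).choose s : ℚ) *
        ((k.factorial : ℚ))⁻¹ ^ s := by
  obtain ⟨d, rfl⟩ : ∃ d, k = d + 2 := ⟨k - 2, by omega⟩
  set c : ℚ := (((d+2).factorial : ℚ))⁻¹ with hcdef
  have hXdvd : X ∣ T := X_dvd_iff.mpr hT0
  have hz : ∀ m j : ℕ, j < m → coeff j (T ^ m) = 0 := by
    intro m j hj
    exact X_pow_dvd_iff.mp (pow_dvd_pow_of_dvd hXdvd m) j hj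
  have expand : ∀ m : ℕ, T ^ (m+1) = X * T ^ m + C c * T ^ (m + (d+2)) := by
    intro m
    conv_lhs => rw [pow_succ']
    nth_rewrite 1 [hT]
    ring
  have hrec : ∀ j m : ℕ, coeff (j+1) (T ^ (m+1)) =
      coeff j (T ^ m) + c * coeff (j+1) (T ^ (m + (d+2))) := by
    intro j m
    rw [expand m, map_add, coeff_succ_X_mul, coeff_C_mul]
  have hdiag : ∀ m : ℕ, coeff m (T ^ m) = 1 := by
    intro m
    induction m with
    | zero => simp
    | succ m ihm => rw [hrec m m, ihm, hz (m + (d+2)) (m+1) (by omega), mul_zero, add_zero]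
  have key : ∀ s ℓ : ℕ, 1 ≤ s + ℓ →
      coeff (s * (d+1) + ℓ) (T ^ ℓ) =
        (ℓ : ℚ) / ((s * (d+1) + ℓ : ℕ) : ℚ) * (((d+2) * s + ℓ - 1).choose s : ℚ) * c ^ s := by
    intro s
    induction s with
    | zero =>
      intro ℓ hℓ'
      simp only [Nat.zero_mul, Nat.zero_add, Nat.mul_zero, zero_mul, zero_add, mul_zero,
        pow_zero, Nat.choose_zero_right, Nat.cast_one, mul_one]
      rw [hdiag ℓ, div_self (by exact_mod_cast (by omega : ℓ ≠ 0))]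
    | succ s ih =>
      intro ℓ
      induction ℓ with
      | zero =>
        intro _
        have h0 : (s+1)*(d+1) + 0 ≠ 0 := by positivity
        rw [pow_zero]
        simp [coeff_one, h0]
      | succ ℓ ihℓ =>
        intro _
        rw [show (s+1)*(d+1)+(ℓ+1) = ((s+1)*(d+1)+ℓ)+1 from rfl]
        rw [hrec ((s+1)*(d+1)+ℓ) ℓ]
        rw [ihℓ (by omega)]
        rw [show ((s+1)*(d+1)+ℓ)+1 = s*(d+1)+(ℓ+(d+2)) from by ring]
        rw [ih (ℓ+(d+2)) (by omega)]
        have a1 : (d+2)*(s+1)+ℓ-1 = (d+2)*s+(d+ℓ+1) := by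
          rw [show (d+2)*(s+1) = (d+2)*s+(d+2) from by ring]
          generalize (d+2)*s = P; omega
        have a2 : (d+2)*s+(ℓ+(d+2))-1 = (d+2)*s+(d+ℓ+1) := by
          generalize (d+2)*s = P; omega
        have a3 : (d+2)*(s+1)+(ℓ+1)-1 = ((d+2)*s+(d+ℓ+1))+1 := by
          rw [show (d+2)*(s+1) = (d+2)*s+(d+2) from by ring]
          generalize (d+2)*s = P; omega
        rw [a1, a2, a3]
        set M := (d+2)*s+(d+ℓ+1) with hM
        have hms : M - s = (s+1)*(d+1)+ℓ := by
          rw [hM, show (d+2)*s = (d+1)*s + s from by ring,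
            show (s+1)*(d+1) = (d+1)*s + (d+1) from by ring]
          generalize (d+1)*s = P; omega
        have h1 : M.choose (s+1) * (s+1) = M.choose s * ((s+1)*(d+1)+ℓ) := by
          rw [Nat.choose_succ_right_eq, hms]
        have h2 : (M+1).choose (s+1) = M.choose s + M.choose (s+1) := Nat.choose_succ_succ _ _
        have h1Q : (M.choose (s+1) : ℚ) * ((s:ℚ)+1)
            = (M.choose s : ℚ) * (((s:ℚ)+1)*((d:ℚ)+1)+(ℓ:ℚ)) := by
          exact_mod_cast h1
        have G := phylo_aux (d:ℚ) (s:ℚ) (ℓ:ℚ) (M.choose (s+1) : ℚ) (M.choose s : ℚ)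
          (by positivity) (by positivity) (by positivity) h1Q
        rw [h2]
        push_cast
        linear_combination c^(s+1) * G
  have hns' : n = s * (d+1) + ℓ := by rw [hns]; norm_num
  rw [hns', key s ℓ (by omega)]
  push_cast
  ring_nf
end

section
/- Let k ≥ 2 be an integer and let T = T_k be the unique formal power series over ℚ with constant coefficient 0 satisfying T = X + T^k/k!. Then for all integers ℓ ≥ 1 and n ≥ 1, if k−1 does not divide n − ℓ, the coefficient of X^n in T^ℓ is 0. -/
open PowerSeries

lemma phylo_coeff_vanish_aux (k : ℕ) (hk : 2 ≤ k) (T : PowerSeries ℚ)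
    (hT0 : constantCoeff T = 0)
    (hT : T = X + C ((k.factorial : ℚ))⁻¹ * T ^ k) :
    ∀ n : ℕ, coeff n T ≠ 0 → (k : ℤ) - 1 ∣ (n : ℤ) - 1 := by
  intro n
  induction n using Nat.strong_induction_on with
  | _ n ih =>
    intro hne
    rcases Nat.lt_or_ge n 2 with h2 | h2
    · interval_cases n
      · exact absurd hT0 (by simpa using hne)
      · simp
    · -- n ≥ 2
      have hcn : coeff n T = ((k.factorial : ℚ))⁻¹ * coeff n (T ^ k) := by
        conv_lhs => rw [hT]
        rw [map_add, coeff_X, if_neg (by omega), zero_add, coeff_C_mul]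
      have hpow : coeff n (T ^ k) ≠ 0 := by
        intro h0; rw [hcn, h0, mul_zero] at hne; exact hne rfl
      rw [coeff_pow] at hpow
      obtain ⟨l, hl, hlne⟩ := Finset.exists_ne_zero_of_sum_ne_zero hpow
      rw [Finset.mem_finsuppAntidiag] at hl
      have hli : ∀ i ∈ Finset.range k, coeff (l i) T ≠ 0 := by
        intro i hi h0
        exact hlne (Finset.prod_eq_zero hi h0)
      have hpos : ∀ i ∈ Finset.range k, 1 ≤ l i := by
        intro i hi
        by_contra h
        have : l i = 0 := by omega
        exact hli i hi (by rw [this]; simpa using hT0)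
      have hlt : ∀ i ∈ Finset.range k, l i < n := by
        intro i hi
        have h0 : (0 : ℕ) ∈ Finset.range k := by simp; omega
        have h1 : (1 : ℕ) ∈ Finset.range k := by simp; omega
        have hsum := hl.1
        rcases eq_or_ne i 0 with rfl | hne0
        · have := Finset.sum_le_sum_of_subset (f := fun i => l i) (s := ({0, 1} : Finset ℕ))
            (t := Finset.range k) (by intro x hx; simp only [Finset.mem_insert, Finset.mem_singleton] at hx; rcases hx with rfl|rfl; exacts [h0, h1])
          rw [Finset.sum_pair (by norm_num)] at this
          have hc : ∑ x ∈ Finset.range k, (fun i => l i) x = n := hl.1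
          rw [hc] at this
          have := hpos 1 h1
          omega
        · have := Finset.sum_le_sum_of_subset (f := fun j => l j) (s := ({0, i} : Finset ℕ))
            (t := Finset.range k) (by intro x hx; simp only [Finset.mem_insert, Finset.mem_singleton] at hx; rcases hx with rfl|rfl; exacts [h0, hi])
          rw [Finset.sum_pair (Ne.symm hne0)] at this
          have hc : ∑ x ∈ Finset.range k, (fun j => l j) x = n := hl.1
          rw [hc] at this
          have := hpos 0 h0
          omega
      have hdvd : ∀ i ∈ Finset.range k, (k : ℤ) - 1 ∣ (l i : ℤ) - 1 := fun i hi =>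
        ih (l i) (hlt i hi) (hli i hi)
      have hsumdvd : (k : ℤ) - 1 ∣ ∑ i ∈ Finset.range k, ((l i : ℤ) - 1) :=
        Finset.dvd_sum hdvd
      have hsum : ∑ i ∈ Finset.range k, ((l i : ℤ) - 1) = (n : ℤ) - k := by
        rw [Finset.sum_sub_distrib]
        have : ∑ i ∈ Finset.range k, (l i : ℤ) = (n : ℤ) := by
          rw [← Nat.cast_sum, hl.1]
        simp [this]
      rw [hsum] at hsumdvd
      have : (n : ℤ) - 1 = ((n : ℤ) - k) + ((k : ℤ) - 1) := by ring
      rw [this]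
      exact dvd_add hsumdvd dvd_rfl

/-- Let `k ≥ 2` and let `T` be the unique power series over `ℚ` with constant
coefficient `0` satisfying `T = X + T^k/k!`. For `ℓ ≥ 1` and `n ≥ 1`, if `k-1`
does not divide `n - ℓ`, then the coefficient of `X^n` in `T^ℓ` is `0`. -/
theorem phylo_coeff_pow_vanish (k : ℕ) (hk : 2 ≤ k) (T : PowerSeries ℚ)
    (hT0 : constantCoeff T = 0)
    (hT : T = X + C ((k.factorial : ℚ))⁻¹ * T ^ k)
    (ℓ n : ℕ) (hℓ : 1 ≤ ℓ) (hn : 1 ≤ n)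
    (hndvd : ¬ ((k : ℤ) - 1 ∣ (n : ℤ) - (ℓ : ℤ))) :
    coeff n (T ^ ℓ) = 0 := by
  by_contra hne
  rw [coeff_pow] at hne
  obtain ⟨l, hl, hlne⟩ := Finset.exists_ne_zero_of_sum_ne_zero hne
  rw [Finset.mem_finsuppAntidiag] at hl
  have hli : ∀ i ∈ Finset.range ℓ, coeff (l i) T ≠ 0 := fun i hi h0 =>
    hlne (Finset.prod_eq_zero hi h0)
  have hdvd : ∀ i ∈ Finset.range ℓ, (k : ℤ) - 1 ∣ (l i : ℤ) - 1 := fun i hi =>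
    phylo_coeff_vanish_aux k hk T hT0 hT (l i) (hli i hi)
  have hsumdvd : (k : ℤ) - 1 ∣ ∑ i ∈ Finset.range ℓ, ((l i : ℤ) - 1) :=
    Finset.dvd_sum hdvd
  have hsum : ∑ i ∈ Finset.range ℓ, ((l i : ℤ) - 1) = (n : ℤ) - ℓ := by
    rw [Finset.sum_sub_distrib]
    have : ∑ i ∈ Finset.range ℓ, (l i : ℤ) = (n : ℤ) := by
      rw [← Nat.cast_sum, hl.1]
    simp [this]
  rw [hsum] at hsumdvd
  exact hndvd hsumdvd
end

section
/- Let k ≥ 2 be an integer and let T = T_k be the unique formal power series over ℚ with constant coefficient 0 satisfying T = X + T^k/k!. Then for every nonnegative integer s, setting n = s(k−1)+1, the coefficient of X^n in T equals (1/(s(k−1)+1)) · C(ks, s) · (1/k!)^s. Equivalently, the number t_{k,n} = n! · [X^n]T of k-phylogenetic trees on leaf set [n] equals (n!/(s(k−1)+1)) · C(ks, s) / k!^s. -/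
open PowerSeries

section PhyloAux
open Finset

/-- Vandermonde-type sum. -/
lemma vand (M K s : ℕ) (hs : 1 ≤ s) :
    ∑ i ∈ range (M + 1 + 1), (if 1 ≤ i ∧ i ≤ s then M.choose (i-1) * K.choose (s-i) else 0)
      = (M + K).choose (s - 1) := by
  have h1 : ∑ i ∈ range (M + 1 + 1), (if 1 ≤ i ∧ i ≤ s then M.choose (i-1) * K.choose (s-i) else 0)
      = ∑ i ∈ range (M + s + 2), (if 1 ≤ i ∧ i ≤ s then M.choose (i-1) * K.choose (s-i) else 0) := by
    apply Finset.sum_subset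
    · intro x hx; simp only [mem_range] at *; omega
    · intro x hx hx'
      simp only [mem_range] at hx hx'
      split_ifs with h
      · rw [Nat.choose_eq_zero_of_lt (by omega), zero_mul]
      · rfl
  rw [h1, ← Finset.sum_filter]
  have h2 : (range (M + s + 2)).filter (fun i => 1 ≤ i ∧ i ≤ s) = Finset.Ico 1 (s+1) := by
    ext x; simp only [mem_filter, mem_range, mem_Ico]; omega
  rw [h2, Finset.sum_Ico_eq_sum_range]
  have h3 : s + 1 - 1 = s := rfl
  rw [h3, Nat.add_choose_eq, Finset.Nat.sum_antidiagonal_eq_sum_range_succ_mk]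
  have h4 : s - 1 + 1 = s := by omega
  simp only [Nat.succ_eq_add_one, h4]
  apply Finset.sum_congr rfl
  intro i hi
  simp only [mem_range] at hi
  congr 1
  · congr 1; omega
  · congr 1; omega

/-- The conjectured coefficient of `X^n` in `T^m`. -/
noncomputable def phyloVal (k : ℕ) (a : ℚ) (n m : ℕ) : ℚ :=
  if m = 0 then (if n = 0 then 1 else 0)
  else if m ≤ n ∧ (k-1) ∣ (n - m) then
    (m : ℚ)/(n : ℚ) * a^((n-m)/(k-1)) *
      (((n + (n-m)/(k-1) - 1).choose ((n-m)/(k-1))) : ℚ)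
  else 0

lemma phyloVal_pos (k : ℕ) (a : ℚ) (n m s : ℕ) (hk : 2 ≤ k) (hm : m ≠ 0) (hmn : m ≤ n)
    (hd : n - m = s * (k-1)) :
    phyloVal k a n m = (m : ℚ)/(n : ℚ) * a^s * (((n + s - 1).choose s) : ℚ) := by
  have hk1 : 0 < k - 1 := by omega
  have hs : (n - m) / (k-1) = s := by rw [hd, Nat.mul_div_cancel _ hk1]
  rw [phyloVal, if_neg hm, if_pos ⟨hmn, ⟨s, by rw [hd, mul_comm]⟩⟩, hs]

lemma phyloVal_neg (k : ℕ) (a : ℚ) (n m : ℕ) (hm : m ≠ 0)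
    (h : ¬ (m ≤ n ∧ (k-1) ∣ (n - m))) : phyloVal k a n m = 0 := by
  rw [phyloVal, if_neg hm, if_neg h]

lemma phylo_key (k' : ℕ) (a : ℚ) (m d s : ℕ) (hm : 1 ≤ m) (hs : 1 ≤ s)
    (hd : d = (k' + 1) * s) :
    ∑ i ∈ range (m+1), a^i * (m.choose i : ℚ) * phyloVal (k'+2) a (d + i) ((k'+2)*i)
      = phyloVal (k'+2) a (m + d) m := by
  obtain ⟨M, rfl⟩ : ∃ M, m = M + 1 := ⟨m - 1, by omega⟩
  have hd0 : d ≠ 0 := by rw [hd]; positivity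
  have hrhs : phyloVal (k'+2) a (M + 1 + d) (M+1)
      = ((M+1 : ℕ) : ℚ)/((M + 1 + d : ℕ) : ℚ) * a^s * (((M + 1 + d + s - 1).choose s) : ℚ) := by
    apply phyloVal_pos _ _ _ _ s (by omega) (by omega) (by omega)
      (by rw [hd, mul_comm s]; exact Nat.add_sub_cancel_left _ _)
  have hterm : ∀ i ∈ range (M + 1 + 1),
      a^i * (((M+1).choose i : ℕ) : ℚ) * phyloVal (k'+2) a (d + i) ((k'+2)*i)
        = if 1 ≤ i ∧ i ≤ s then
            (a^s * ((M+1 : ℕ) : ℚ) / (s : ℚ)) * ((M.choose (i-1) * (d+s).choose (s-i) : ℕ) : ℚ)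
          else 0 := by
    intro i _
    rcases Nat.eq_zero_or_pos i with rfl | hi1
    · rw [if_neg (by omega)]
      simp [phyloVal, hd0]
    obtain ⟨i', rfl⟩ : ∃ i', i = i' + 1 := ⟨i - 1, by omega⟩
    by_cases his : i' + 1 ≤ s
    · rw [if_pos ⟨by omega, his⟩]
      obtain ⟨j, hij⟩ : ∃ j, s = (i' + 1) + j := ⟨s - (i'+1), by omega⟩
      have hdi : d + (i' + 1) = (k'+2)*(i'+1) + (k'+1)*j := by rw [hd, hij]; ring
      have hval : phyloVal (k'+2) a (d + (i'+1)) ((k'+2)*(i'+1))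
          = (((k'+2)*(i'+1) : ℕ) : ℚ)/((d + (i'+1) : ℕ) : ℚ) * a^j
              * (((d + (i'+1) + j - 1).choose j) : ℚ) := by
        apply phyloVal_pos _ _ _ _ j (by omega) (by positivity) (by rw [hdi]; omega)
        · show d + (i'+1) - (k'+2)*(i'+1) = j * (k'+1)
          rw [hdi, Nat.add_sub_cancel_left, mul_comm]
      rw [hval]
      -- nat identities
      have A : ((M+1).choose (i'+1) : ℚ) * (i'+1) = (M+1) * (M.choose i' : ℚ) := by
        have h0 := Nat.add_one_mul_choose_eq M i'
        exact_mod_cast h0.symm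
      have B : (((d + (i'+1) + j - 1).choose j : ℕ) : ℚ) * ((d + (i'+1) + j : ℕ) : ℚ)
          = (((d + (i'+1) + j).choose j : ℕ) : ℚ) * ((d + (i'+1) : ℕ) : ℚ) := by
        have h1 := Nat.choose_mul_succ_eq (d + (i'+1) + j - 1) j
        have h2 : d + (i'+1) + j - 1 + 1 = d + (i'+1) + j := by omega
        rw [h2] at h1
        have h3 : d + (i'+1) + j - j = d + (i'+1) := by omega
        rw [h3] at h1
        exact_mod_cast h1
      have hKs : d + s = d + (i'+1) + j := by omega
      have hCs : s - (i'+1) = j := by omega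
      have hkC : ((k'+2) : ℚ) * s = (d : ℚ) + s := by
        have : (k'+2) * s = d + s := by rw [hd]; ring
        exact_mod_cast this
      rw [hKs, hCs, hij]
      have hne1 : ((d + (i'+1) : ℕ) : ℚ) ≠ 0 := by positivity
      have hne2 : ((i' + 1 + j : ℕ) : ℚ) ≠ 0 := by positivity
      have hkC2 : ((k' : ℚ)+2) * (((i' : ℚ)+1)+(j : ℚ)) = (d : ℚ) + ((i' : ℚ)+1) + (j : ℚ) := by
        have hn : (k'+2) * ((i'+1)+j) = d + (i'+1) + j := by rw [hd, hij]; ring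
        exact_mod_cast hn
      push_cast at A B ⊢
      field_simp
      linear_combination
        (a^(i'+1) * a^j * ((i' : ℚ)+1+(j : ℚ)) * ((k' : ℚ)+2) * (((d+(i'+1)+j-1).choose j : ℕ) : ℚ)) * A
        + (a^(i'+1) * a^j * ((M : ℚ)+1) * ((M.choose i' : ℕ) : ℚ) * (((d+(i'+1)+j-1).choose j : ℕ) : ℚ)) * hkC2
        + (a^(i'+1) * a^j * ((M : ℚ)+1) * ((M.choose i' : ℕ) : ℚ)) * B
    · rw [if_neg (by omega), phyloVal_neg, mul_zero]
      · positivity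
      · rintro ⟨h1, -⟩
        rw [hd] at h1
        have h2 : (k'+1)*s < (k'+1)*(i'+1) := by
          have : s < i' + 1 := by omega
          exact Nat.mul_lt_mul_of_le_of_lt (le_refl _) this (by omega)
        have h3 : (k'+2)*(i'+1) = (k'+1)*(i'+1) + (i'+1) := by ring
        rw [h3] at h1
        omega
  rw [Finset.sum_congr rfl hterm, hrhs]
  have hsplit : ∀ i ∈ range (M + 1 + 1),
      (if 1 ≤ i ∧ i ≤ s then
          (a^s * ((M+1 : ℕ) : ℚ) / (s : ℚ)) * ((M.choose (i-1) * (d+s).choose (s-i) : ℕ) : ℚ)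
        else 0)
      = (a^s * ((M+1 : ℕ) : ℚ) / (s : ℚ)) *
          (((if 1 ≤ i ∧ i ≤ s then M.choose (i-1) * (d+s).choose (s-i) else 0 : ℕ)) : ℚ) := by
    intro i _
    split_ifs <;> simp
  rw [Finset.sum_congr rfl hsplit, ← Finset.mul_sum, ← Nat.cast_sum, vand M (d+s) s hs]
  have hnat : (M+(d+s)).choose s * s = (M+(d+s)).choose (s-1) * (M+1+d) := by
    have h := Nat.choose_succ_right_eq (M+(d+s)) (s-1)
    have h1 : s - 1 + 1 = s := by omega
    rw [h1] at h
    have h2 : M+(d+s) - (s-1) = M+1+d := by omega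
    rw [h2] at h
    exact h
  have hnatQ : ((M+(d+s)).choose s : ℚ) * (s : ℚ)
      = ((M+(d+s)).choose (s-1) : ℚ) * ((M : ℚ)+1+(d : ℚ)) := by exact_mod_cast hnat
  have h4 : M+1+d+s-1 = M+(d+s) := by omega
  rw [h4]
  have hne3 : (s : ℚ) ≠ 0 := by positivity
  have hne4 : ((M : ℚ)+1+(d : ℚ)) ≠ 0 := by positivity
  push_cast
  field_simp
  linear_combination (-(a^s)) * hnatQ

lemma phylo_sum (k' : ℕ) (a : ℚ) (m n : ℕ) (hm : 1 ≤ m) (hmn : m ≤ n) :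
    ∑ i ∈ range (m+1), a^i * (m.choose i : ℚ) * phyloVal (k'+2) a (n - m + i) ((k'+2)*i)
      = phyloVal (k'+2) a n m := by
  obtain ⟨d, rfl⟩ : ∃ d, n = m + d := ⟨n - m, by omega⟩
  simp only [Nat.add_sub_cancel_left]
  by_cases hdvd : (k'+1) ∣ d
  · obtain ⟨s, hds⟩ := hdvd
    rcases Nat.eq_zero_or_pos s with rfl | hs
    · have hd0 : d = 0 := by simpa using hds
      subst hd0
      simp only [add_zero, zero_add]
      rw [phyloVal_pos (k'+2) a m m 0 (by omega) (by omega) (le_refl m) (by simp)]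
      rw [Finset.sum_eq_single 0]
      · simp [phyloVal, div_self (show (m:ℚ) ≠ 0 by positivity)]
      · intro b _ hb
        rw [phyloVal_neg, mul_zero]
        · positivity
        · rintro ⟨h1, -⟩
          obtain ⟨p, hp, h2p⟩ : ∃ p, (k'+2)*b = p ∧ 2*b ≤ p :=
            ⟨_, rfl, Nat.mul_le_mul_right b (by omega)⟩
          rw [hp] at h1
          omega
      · intro h; simp at h
    · exact phylo_key k' a m d s hm hs hds
  · rw [phyloVal_neg _ _ _ _ (by omega)
      (fun h => hdvd (by simpa using h.2))]
    apply Finset.sum_eq_zero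
    intro i hi
    rcases Nat.eq_zero_or_pos i with rfl | hi1
    · have hd0 : d ≠ 0 := fun h => hdvd (h ▸ dvd_zero _)
      simp [phyloVal, hd0]
    · rw [phyloVal_neg, mul_zero]
      · positivity
      · rintro ⟨h1, h2⟩
        have e2 : (k'+2)*i = (k'+1)*i + i := by ring
        rw [e2] at h1 h2
        obtain ⟨p, hp⟩ : ∃ p, (k'+1)*i = p := ⟨_, rfl⟩
        have hdp : (k'+1) ∣ p := ⟨i, hp.symm⟩
        rw [hp] at h1 h2
        have h3 : d + i - (p + i) = d - p := by omega
        rw [h3] at h2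
        have h4 : p ≤ d := by omega
        exact hdvd (by
          have h5 : d = (d - p) + p := by omega
          rw [h5]
          exact Nat.dvd_add h2 hdp)

lemma coeff_pow_eq_zero (T : PowerSeries ℚ) (hT0 : PowerSeries.constantCoeff T = 0) {n m : ℕ}
    (h : n < m) : PowerSeries.coeff n (T^m) = 0 := by
  have hX : (PowerSeries.X : PowerSeries ℚ) ∣ T := PowerSeries.X_dvd_iff.mpr hT0
  exact PowerSeries.X_pow_dvd_iff.mp (pow_dvd_pow_of_dvd hX m) n h

lemma phylo_main (k' : ℕ) (a : ℚ) (T : PowerSeries ℚ) (hT0 : PowerSeries.constantCoeff T = 0)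
    (hT : T = PowerSeries.X + PowerSeries.C a * T^(k'+2)) :
    ∀ N n m, 2*n ≤ N + m → PowerSeries.coeff n (T^m) = phyloVal (k'+2) a n m := by
  intro N
  induction N using Nat.strong_induction_on with
  | _ N ih =>
  intro n m hN
  rcases Nat.eq_zero_or_pos m with rfl | hm
  · simp [phyloVal, PowerSeries.coeff_one]
  rcases lt_or_ge n m with hnm | hmn
  · rw [coeff_pow_eq_zero T hT0 hnm, phyloVal_neg _ _ _ _ (by omega)
      (by rintro ⟨h1, -⟩; omega)]
  · have hstep : ∀ i ∈ range (m+1),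
        PowerSeries.coeff (n - m + i) (T^((k'+2)*i)) = phyloVal (k'+2) a (n-m+i) ((k'+2)*i) := by
      intro i hi
      simp only [mem_range] at hi
      by_cases hle : (k'+2)*i ≤ n - m + i
      · apply ih (N-1) (by omega)
        obtain ⟨p, hp, h2p⟩ : ∃ p, (k'+2)*i = p ∧ 2*i ≤ p :=
          ⟨_, rfl, Nat.mul_le_mul_right i (by omega)⟩
        rw [hp] at hle ⊢
        omega
      · have hi0 : i ≠ 0 := by rintro rfl; simp at hle
        rw [coeff_pow_eq_zero T hT0 (Nat.lt_of_not_le hle),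
          phyloVal_neg _ _ _ _ (by positivity) (by rintro ⟨h1, -⟩; exact hle h1)]
    calc PowerSeries.coeff n (T^m)
        = ∑ i ∈ range (m+1),
            a^i * (m.choose i : ℚ) * PowerSeries.coeff (n - m + i) (T^((k'+2)*i)) := by
          conv_lhs => rw [hT, add_comm (PowerSeries.X : PowerSeries ℚ), add_pow]
          rw [map_sum]
          apply Finset.sum_congr rfl
          intro i hi
          simp only [mem_range] at hi
          have e1 : (PowerSeries.C a * T^(k'+2))^i * PowerSeries.X^(m-i)
                * ((m.choose i : ℕ) : PowerSeries ℚ)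
              = PowerSeries.C (a^i * (m.choose i : ℚ)) * (T^((k'+2)*i) * PowerSeries.X^(m-i)) := by
            rw [mul_pow, ← map_pow, ← pow_mul, ← map_natCast (PowerSeries.C (R := ℚ)) (m.choose i), map_mul]
            ring
          rw [e1, PowerSeries.coeff_C_mul, PowerSeries.coeff_mul_X_pow',
            if_pos (show m - i ≤ n by omega)]
          have e2 : n - (m - i) = n - m + i := by omega
          rw [e2]
      _ = ∑ i ∈ range (m+1), a^i * (m.choose i : ℚ) * phyloVal (k'+2) a (n-m+i) ((k'+2)*i) :=
          Finset.sum_congr rfl (fun i hi => by rw [hstep i hi])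
      _ = phyloVal (k'+2) a n m := phylo_sum k' a m n hm hmn

end PhyloAux

/-- Let `k ≥ 2` and let `T` be the unique power series over `ℚ` with constant
coefficient `0` satisfying `T = X + T^k/k!`. For every nonnegative integer `s`,
with `n = s(k-1)+1`, the coefficient of `X^n` in `T` equals
`(1/(s(k-1)+1)) · C(ks, s) · (1/k!)^s`; equivalently, `n! · [X^n]T`, the number
of `k`-phylogenetic trees on leaf set `[n]`, equals `(n!/(s(k-1)+1)) · C(ks,s) / k!^s`. -/
theorem phylo_tree_count (k : ℕ) (hk : 2 ≤ k) (T : PowerSeries ℚ)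
    (hT0 : constantCoeff T = 0)
    (hT : T = X + C ((k.factorial : ℚ))⁻¹ * T ^ k)
    (s n : ℕ) (hn : n = s * (k - 1) + 1) :
    coeff n T =
      (1 / ((s : ℚ) * (k - 1) + 1)) * ((k * s).choose s : ℚ) *
        ((k.factorial : ℚ))⁻¹ ^ s ∧
    (n.factorial : ℚ) * coeff n T =
      ((n.factorial : ℚ) / ((s : ℚ) * (k - 1) + 1)) * ((k * s).choose s : ℚ) /
        (k.factorial : ℚ) ^ s := by
  obtain ⟨k', rfl⟩ : ∃ k', k = k' + 2 := ⟨k - 2, by omega⟩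
  set a : ℚ := (((k'+2).factorial : ℚ))⁻¹ with ha
  have h1 : coeff n T = phyloVal (k'+2) a n 1 := by
    have h := phylo_main k' a T hT0 hT (2*n) n 1 (by omega)
    rwa [pow_one] at h
  have hn1 : 1 ≤ n := by omega
  have hval : phyloVal (k'+2) a n 1 = (1:ℚ)/(n:ℚ) * a^s * ((((k'+2)*s).choose s : ℕ) : ℚ) := by
    have hdd : n - 1 = s * ((k'+2)-1) := by rw [hn]; exact Nat.succ_sub_one _
    rw [phyloVal_pos (k'+2) a n 1 s (by omega) (by omega) hn1 hdd]
    have hns : n + s - 1 = (k'+2)*s := by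
      have e : (k'+2)*s = s*(k'+1) + s := by ring
      obtain ⟨q, hq⟩ : ∃ q, s*(k'+1) = q := ⟨_, rfl⟩
      have hn' : n = q + 1 := by rw [hn]; rw [show k'+2-1 = k'+1 from rfl, hq]
      rw [e, hq, hn']
      omega
    rw [hns]
    norm_num
  have hnQ : (n:ℚ) = (s:ℚ) * (((k'+2 : ℕ) : ℚ) - 1) + 1 := by
    rw [hn]
    push_cast [show k'+2-1 = k'+1 from rfl]
    ring
  constructor
  · rw [h1, hval, hnQ]
    ring
  · rw [h1, hval, hnQ]
    ring
end

section
/- Let k ≥ 2 be an integer, let T = T_k be the unique formal power series over ℚ with constant coefficient 0 satisfying T = X + T^k/k!, let D = 1 − T^{k−1}/(k−1)! (a unit in ℚ[[X]] since its constant coefficient is 1), and let M_0 = T · D⁻¹. Then for every nonnegative integer s, setting n = s(k−1)+1, the coefficient of X^n in M_0 equals (ks+1) times the coefficient of X^n in T; moreover, if k−1 does not divide n−1 (with n ≥ 1), the coefficient of X^n in M_0 is 0. -/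
open PowerSeries

/-- Vanishing of coefficients of `T` away from exponents `≡ 1 mod (k-1)`. -/
lemma phylo_T_coeff_vanish (k : ℕ) (hk : 2 ≤ k) (T : PowerSeries ℚ)
    (hT0 : constantCoeff T = 0)
    (hT : T = X + C ((k.factorial : ℚ))⁻¹ * T ^ k) :
    ∀ n : ℕ, ¬ ((k : ℤ) - 1 ∣ (n : ℤ) - 1) → coeff n T = 0 := by
  intro n
  induction n using Nat.strong_induction_on with
  | _ n IH =>
    intro hdvd
    -- inner claim about powers of T
    have claim : ∀ j : ℕ, ∀ m : ℕ, m + (k - (j + 1)) ≤ n →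
        ¬ ((k : ℤ) - 1 ∣ (m : ℤ) - (j + 1)) → coeff m (T ^ (j + 1)) = 0 := by
      intro j
      induction j with
      | zero =>
        intro m hm hd
        rw [pow_one]
        exact IH m (by omega) hd
      | succ j IHj =>
        intro m hm hd
        rw [pow_succ, mul_comm, coeff_mul]
        apply Finset.sum_eq_zero
        rintro ⟨i, m'⟩ hp
        rw [Finset.HasAntidiagonal.mem_antidiagonal] at hp
        simp only
        rcases Nat.eq_zero_or_pos i with hi0 | hi0
        · subst hi0
          rw [coeff_zero_eq_constantCoeff_apply, hT0, zero_mul]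
        rcases Nat.eq_zero_or_pos m' with hm0 | hm0
        · subst hm0
          rw [coeff_zero_eq_constantCoeff_apply, map_pow, hT0,
            zero_pow (Nat.succ_ne_zero j), mul_zero]
        by_cases hdi : ((k : ℤ) - 1 ∣ (i : ℤ) - 1)
        · -- then the second factor vanishes by IHj
          have hd' : ¬ ((k : ℤ) - 1 ∣ (m' : ℤ) - (j + 1)) := by
            intro h
            apply hd
            have hmi : (m : ℤ) = (i : ℤ) + (m' : ℤ) := by exact_mod_cast hp.symm
            have heq : (m : ℤ) - ((j + 1 : ℕ) + 1)
                = ((i : ℤ) - 1) + ((m' : ℤ) - ((j : ℤ) + 1)) := by push_cast [hmi]; ring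
            rw [heq]
            exact dvd_add hdi h
          rw [IHj m' (by omega) hd', mul_zero]
        · rw [IH i (by omega) hdi, zero_mul]
    -- now use the defining equation
    have hn1 : n ≠ 1 := by
      intro h
      subst h
      exact hdvd (by simp)
    have hco := congrArg (coeff n) hT
    rw [map_add, coeff_C_mul, coeff_X, if_neg hn1] at hco
    have hk1 : k - 1 + 1 = k := by omega
    have hTk : coeff n (T ^ k) = 0 := by
      rw [← hk1]
      apply claim (k - 1) n (by omega)
      intro h
      apply hdvd
      have h2 : ((k : ℤ) - 1 ∣ (n : ℤ) - ((k - 1 : ℕ) + 1)) := h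
      have hkc : ((k - 1 : ℕ) : ℤ) = (k : ℤ) - 1 := by push_cast [Nat.cast_sub (by omega : 1 ≤ k)]; ring
      have : ((n : ℤ) - 1) = ((n : ℤ) - ((k - 1 : ℕ) + 1)) + ((k : ℤ) - 1) := by
        rw [hkc]; ring
      rw [this]
      exact dvd_add h2 dvd_rfl
    rw [hTk, mul_zero, add_zero] at hco
    exact hco

/-- Let `k ≥ 2`, let `T` be the unique power series over `ℚ` with constant coefficient `0`
satisfying `T = X + T^k/k!`, let `D = 1 - T^(k-1)/(k-1)!` and `M₀ = T · D⁻¹`.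
Then for every nonnegative `s`, with `n = s(k-1)+1`, the coefficient of `X^n` in `M₀`
is `(ks+1)` times that of `T`; moreover if `n ≥ 1` and `k-1` does not divide `n-1`,
the coefficient of `X^n` in `M₀` is `0`. -/
theorem phylo_vertex_gf_coeff (k : ℕ) (hk : 2 ≤ k) (T : PowerSeries ℚ)
    (hT0 : constantCoeff T = 0)
    (hT : T = X + C ((k.factorial : ℚ))⁻¹ * T ^ k)
    (D M₀ : PowerSeries ℚ)
    (hD : D = 1 - C (((k - 1).factorial : ℚ))⁻¹ * T ^ (k - 1))
    (hM : M₀ = T * D⁻¹) :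
    (∀ s n : ℕ, n = s * (k - 1) + 1 →
      coeff n M₀ = ((k : ℚ) * s + 1) * coeff n T) ∧
    (∀ n : ℕ, 1 ≤ n → ¬ ((k : ℤ) - 1 ∣ (n : ℤ) - 1) →
      coeff n M₀ = 0) := by
  set d : ℚ := ((k.factorial : ℚ))⁻¹ with hd_def
  set e : ℚ := (((k - 1).factorial : ℚ))⁻¹ with he_def
  have hkne : (k : ℚ) ≠ 0 := by positivity
  have hfac : (k : ℚ) * (((k - 1).factorial : ℚ)) = (k.factorial : ℚ) := by
    exact_mod_cast congrArg (Nat.cast : ℕ → ℚ) (Nat.mul_factorial_pred (by omega : k ≠ 0))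
  have hke : (k : ℚ) * d = e := by
    rw [hd_def, he_def]
    field_simp [Nat.factorial_ne_zero]
    linarith [hfac]
  have hk1 : k - 1 + 1 = k := by omega
  have hCe : C (k : ℚ) * C d = C e := by rw [← map_mul, hke]
  -- derivative identity
  have hT' : (d⁄dX ℚ) T = 1 + C e * T ^ (k - 1) * (d⁄dX ℚ) T := by
    conv_lhs => rw [hT]
    rw [map_add, derivative_X]
    congr 1
    rw [Derivation.leibniz, Derivation.leibniz_pow]
    simp only [derivative_C, smul_zero, add_zero, mul_zero, smul_eq_mul, nsmul_eq_mul]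
    have hknat : ((k : ℕ) : ℚ⟦X⟧) = C (k : ℚ) := by simp
    rw [hknat]
    linear_combination (T ^ (k - 1) * (d⁄dX ℚ) T) * hCe
  have hDT' : D * (d⁄dX ℚ) T = 1 := by
    rw [hD]
    have : (1 - C e * T ^ (k - 1)) * (d⁄dX ℚ) T
        = (d⁄dX ℚ) T - C e * T ^ (k - 1) * (d⁄dX ℚ) T := by ring
    rw [this]
    nth_rewrite 1 [hT']
    ring
  have hDc : constantCoeff D ≠ 0 := by
    rw [hD]
    simp only [map_sub, map_one, map_mul, constantCoeff_C, map_pow, hT0,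
      zero_pow (by omega : k - 1 ≠ 0), mul_zero, sub_zero]
    exact one_ne_zero
  have hDinv : D⁻¹ = (d⁄dX ℚ) T := by
    symm
    rw [eq_inv_iff_mul_eq_one hDc, mul_comm]
    exact hDT'
  -- key algebraic identity
  have hX : X = T - C d * T ^ k := by linear_combination -hT
  have hpow : T * T ^ (k - 1) = T ^ k := by
    conv_rhs => rw [← hk1, pow_succ']
  have hkey : C (k : ℚ) * X - C ((k : ℚ) - 1) * T = T * D := by
    rw [hX, hD]
    have hC1 : C ((k : ℚ) - 1) = C (k : ℚ) - 1 := by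
      rw [map_sub, map_one]
    rw [hC1]
    linear_combination -(T ^ k) * hCe + (C e) * hpow
  have hkey2 : C (k : ℚ) * (X * (d⁄dX ℚ) T) - C ((k : ℚ) - 1) * M₀ = T := by
    rw [hM, hDinv]
    linear_combination ((d⁄dX ℚ) T) * hkey + T * hDT'
  have hxd : ∀ n : ℕ, coeff n (X * (d⁄dX ℚ) T) = (n : ℚ) * coeff n T := by
    intro n
    cases n with
    | zero =>
      rw [coeff_zero_eq_constantCoeff_apply, map_mul, constantCoeff_X, zero_mul]
      simp
    | succ m =>
      rw [coeff_succ_X_mul, coeff_derivative]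
      push_cast
      ring
  have hcoeff : ∀ n : ℕ, ((k : ℚ) - 1) * coeff n M₀ = ((k : ℚ) * n - 1) * coeff n T := by
    intro n
    have h := congrArg (coeff n) hkey2
    rw [map_sub, coeff_C_mul, coeff_C_mul, hxd] at h
    linarith [h]
  have hkq : (k : ℚ) - 1 ≠ 0 := by
    have : (2 : ℚ) ≤ (k : ℚ) := by exact_mod_cast hk
    linarith
  constructor
  · intro s n hn
    have hcast : (n : ℚ) = (s : ℚ) * ((k : ℚ) - 1) + 1 := by
      subst hn
      push_cast [Nat.cast_sub (by omega : 1 ≤ k)]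
      ring
    have h := hcoeff n
    rw [hcast] at h
    have hfactor : (k : ℚ) * ((s : ℚ) * ((k : ℚ) - 1) + 1) - 1
        = ((k : ℚ) - 1) * ((k : ℚ) * s + 1) := by ring
    rw [hfactor] at h
    exact mul_left_cancel₀ hkq (by rw [h]; ring)
  · intro n hn hdvd
    have hTn : coeff n T = 0 := phylo_T_coeff_vanish k hk T hT0 hT n hdvd
    have h := hcoeff n
    rw [hTn, mul_zero] at h
    exact (mul_eq_zero.mp h).resolve_left hkq
end

section
/- Let k ≥ 2 be an integer, let T = T_k be the unique formal power series over ℚ with constant coefficient 0 satisfying T = X + T^k/k!, let D = 1 − T^{k−1}/(k−1)!, and let M_0 = T · D⁻¹. Then for every polynomial p ∈ ℚ[x], the ratio ([X^n] p(T)) / ([X^n] M_0) tends to 0 as n tends to infinity along integers n with n ≡ 1 (mod k−1), where p(T) denotes the evaluation of p at T in ℚ[[X]]. -/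
open PowerSeries

namespace PhyloAux

lemma coeff_pow_nonneg {F : PowerSeries ℚ} {b : ℕ}
    (h : ∀ j ≤ b, 0 ≤ coeff j F) (i : ℕ) : 0 ≤ coeff b (F ^ i) := by
  induction i generalizing b with
  | zero =>
    simp only [pow_zero, coeff_one]
    split <;> norm_num
  | succ i ih =>
    rw [pow_succ', coeff_mul]
    refine Finset.sum_nonneg fun p hp => ?_
    have hps := Finset.HasAntidiagonal.mem_antidiagonal.mp hp
    exact mul_nonneg (h p.1 (by omega)) (ih (fun j hj => h j (by omega)))

lemma coeff_mul_nonneg {A B : PowerSeries ℚ} (hA : ∀ n, 0 ≤ coeff n A)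
    (hB : ∀ n, 0 ≤ coeff n B) (n : ℕ) : 0 ≤ coeff n (A * B) := by
  rw [coeff_mul]
  exact Finset.sum_nonneg fun p _ => mul_nonneg (hA p.1) (hB p.2)

lemma coeff_mul_le {A B Cs : PowerSeries ℚ} (hAB : ∀ n, coeff n A ≤ coeff n B)
    (hC : ∀ n, 0 ≤ coeff n Cs) (n : ℕ) : coeff n (Cs * A) ≤ coeff n (Cs * B) := by
  rw [coeff_mul, coeff_mul]
  exact Finset.sum_le_sum fun p _ => mul_le_mul_of_nonneg_left (hAB p.2) (hC p.1)

variable {k : ℕ} {T D : PowerSeries ℚ}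

lemma T_nonneg (hk : 2 ≤ k) (hT0 : constantCoeff T = 0)
    (hT : T = X + C ((k.factorial : ℚ))⁻¹ * T ^ k) (n : ℕ) : 0 ≤ coeff n T := by
  induction n using Nat.strong_induction_on with
  | _ n ih =>
    conv_rhs => rw [hT]
    rw [map_add, coeff_C_mul]
    have hX : 0 ≤ coeff n (X : PowerSeries ℚ) := by
      rw [coeff_X]; split <;> norm_num
    refine add_nonneg hX (mul_nonneg (by positivity) ?_)
    have hkk : T ^ k = T * T ^ (k - 1) := by
      rw [← pow_succ']
      congr 1
      omega
    rw [hkk, coeff_mul]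
    refine Finset.sum_nonneg fun p hp => ?_
    have hps := Finset.HasAntidiagonal.mem_antidiagonal.mp hp
    rcases Nat.eq_zero_or_pos p.1 with h1 | h1
    · rw [h1, coeff_zero_eq_constantCoeff, hT0, zero_mul]
    rcases Nat.eq_zero_or_pos p.2 with h2 | h2
    · have : coeff p.2 (T ^ (k - 1)) = 0 := by
        rw [h2, coeff_zero_eq_constantCoeff, map_pow, hT0, zero_pow (by omega)]
      rw [this, mul_zero]
    exact mul_nonneg (ih p.1 (by omega))
      (coeff_pow_nonneg (fun j hj => ih j (by omega)) _)

lemma T_support (hk : 2 ≤ k) (hT0 : constantCoeff T = 0)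
    (hT : T = X + C ((k.factorial : ℚ))⁻¹ * T ^ k) (n : ℕ)
    (hn : (n : ZMod (k - 1)) ≠ 1) : coeff n T = 0 := by
  induction n using Nat.strong_induction_on with
  | _ n ih =>
    have key : ∀ i : ℕ, 1 ≤ i → ∀ b, b < n → ((b : ZMod (k - 1)) ≠ (i : ZMod (k - 1))) →
        coeff b (T ^ i) = 0 := by
      intro i
      induction i with
      | zero => omega
      | succ i ihi =>
        intro _ b hb hne
        rcases Nat.eq_zero_or_pos i with rfl | hi
        · rw [pow_one]
          exact ih b hb (by simpa using hne)
        rw [pow_succ', coeff_mul]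
        refine Finset.sum_eq_zero fun p hp => ?_
        have hps := Finset.HasAntidiagonal.mem_antidiagonal.mp hp
        by_cases h1 : (p.1 : ZMod (k - 1)) = 1
        · have h2 : (p.2 : ZMod (k - 1)) ≠ (i : ZMod (k - 1)) := by
            intro h
            apply hne
            rw [← hps]
            push_cast [h1, h]
            ring
          rw [ihi hi p.2 (by omega) h2, mul_zero]
        · rw [ih p.1 (by omega) h1, zero_mul]
    rw [hT, map_add, coeff_C_mul]
    have hX : coeff n (X : PowerSeries ℚ) = 0 := by
      rw [coeff_X, if_neg]
      rintro rfl
      exact hn (by norm_num)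
    rw [hX, zero_add]
    have hTk : coeff n (T ^ k) = 0 := by
      have hkk : T ^ k = T * T ^ (k - 1) := by
        rw [← pow_succ']; congr 1; omega
      rw [hkk, coeff_mul]
      refine Finset.sum_eq_zero fun p hp => ?_
      have hps := Finset.HasAntidiagonal.mem_antidiagonal.mp hp
      rcases Nat.eq_zero_or_pos p.1 with h1 | h1
      · rw [h1, coeff_zero_eq_constantCoeff, hT0, zero_mul]
      rcases Nat.eq_zero_or_pos p.2 with h2 | h2
      · have : coeff p.2 (T ^ (k - 1)) = 0 := by
          rw [h2, coeff_zero_eq_constantCoeff, map_pow, hT0, zero_pow (by omega)]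
        rw [this, mul_zero]
      by_cases hc1 : (p.1 : ZMod (k - 1)) = 1
      · have h2 : (p.2 : ZMod (k - 1)) ≠ ((k - 1 : ℕ) : ZMod (k - 1)) := by
          rw [ZMod.natCast_self]
          intro h
          apply hn
          rw [← hps]
          push_cast [hc1, h]
          ring
        rw [key (k - 1) (by omega) p.2 (by omega) h2, mul_zero]
      · rw [ih p.1 (by omega) hc1, zero_mul]
    rw [hTk, mul_zero]

lemma Tpow_support (hk : 2 ≤ k) (hT0 : constantCoeff T = 0)
    (hT : T = X + C ((k.factorial : ℚ))⁻¹ * T ^ k) (i b : ℕ)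
    (hb : (b : ZMod (k - 1)) ≠ (i : ZMod (k - 1))) : coeff b (T ^ i) = 0 := by
  induction i generalizing b with
  | zero =>
    rw [pow_zero, coeff_one, if_neg]
    rintro rfl
    exact hb (by norm_num)
  | succ i ih =>
    rw [pow_succ', coeff_mul]
    refine Finset.sum_eq_zero fun p hp => ?_
    have hps := Finset.HasAntidiagonal.mem_antidiagonal.mp hp
    by_cases h1 : (p.1 : ZMod (k - 1)) = 1
    · have h2 : (p.2 : ZMod (k - 1)) ≠ (i : ZMod (k - 1)) := by
        intro h
        apply hb
        rw [← hps]
        push_cast [h1, h]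
        ring
      rw [ih p.2 h2, mul_zero]
    · rw [T_support hk hT0 hT p.1 h1, zero_mul]

lemma D_const (hk : 2 ≤ k) (hT0 : constantCoeff T = 0)
    (hD : D = 1 - C (((k - 1).factorial : ℚ))⁻¹ * T ^ (k - 1)) :
    constantCoeff D = 1 := by
  rw [hD, map_sub, map_one, map_mul, constantCoeff_C, map_pow, hT0,
    zero_pow (by omega : k - 1 ≠ 0), mul_zero, sub_zero]

lemma hU_eq (hk : 2 ≤ k) (hT0 : constantCoeff T = 0)
    (hD : D = 1 - C (((k - 1).factorial : ℚ))⁻¹ * T ^ (k - 1)) :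
    D⁻¹ = 1 + C (((k - 1).factorial : ℚ))⁻¹ * T ^ (k - 1) * D⁻¹ := by
  have hDU : D * D⁻¹ = 1 :=
    PowerSeries.mul_inv_cancel _ (by rw [D_const hk hT0 hD]; norm_num)
  linear_combination hDU - D⁻¹ * hD

lemma U_nonneg (hk : 2 ≤ k) (hT0 : constantCoeff T = 0)
    (hD : D = 1 - C (((k - 1).factorial : ℚ))⁻¹ * T ^ (k - 1))
    (hTnn : ∀ n, 0 ≤ coeff n T) (n : ℕ) : 0 ≤ coeff n D⁻¹ := by
  induction n using Nat.strong_induction_on with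
  | _ n ih =>
    conv_rhs => rw [hU_eq hk hT0 hD]
    rw [map_add, mul_assoc, coeff_C_mul]
    have h1 : 0 ≤ coeff n (1 : PowerSeries ℚ) := by
      rw [coeff_one]; split <;> norm_num
    refine add_nonneg h1 (mul_nonneg (by positivity) ?_)
    rw [coeff_mul]
    refine Finset.sum_nonneg fun p hp => ?_
    have hps := Finset.HasAntidiagonal.mem_antidiagonal.mp hp
    rcases Nat.eq_zero_or_pos p.1 with h1 | h1
    · have : coeff p.1 (T ^ (k - 1)) = 0 := by
        rw [h1, coeff_zero_eq_constantCoeff, map_pow, hT0, zero_pow (by omega)]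
      rw [this, zero_mul]
    exact mul_nonneg (coeff_pow_nonneg (fun j _ => hTnn j) _) (ih p.2 (by omega))

lemma iter_le (hk : 2 ≤ k) (hT0 : constantCoeff T = 0)
    (hD : D = 1 - C (((k - 1).factorial : ℚ))⁻¹ * T ^ (k - 1))
    (hTnn : ∀ n, 0 ≤ coeff n T) (r : ℕ) (n : ℕ) :
    coeff n ((C (((k - 1).factorial : ℚ))⁻¹ * T ^ (k - 1)) ^ r * D⁻¹)
      ≤ coeff n D⁻¹ := by
  have hUnn := U_nonneg hk hT0 hD hTnn
  have hGnn : ∀ m, 0 ≤ coeff m (C (((k - 1).factorial : ℚ))⁻¹ * T ^ (k - 1)) := by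
    intro m
    rw [coeff_C_mul]
    exact mul_nonneg (by positivity) (coeff_pow_nonneg (fun j _ => hTnn j) _)
  have hstep : ∀ m, coeff m (C (((k - 1).factorial : ℚ))⁻¹ * T ^ (k - 1) * D⁻¹)
      ≤ coeff m D⁻¹ := by
    intro m
    conv_rhs => rw [hU_eq hk hT0 hD]
    rw [map_add]
    have h1 : 0 ≤ coeff m (1 : PowerSeries ℚ) := by
      rw [coeff_one]; split <;> norm_num
    linarith
  induction r generalizing n with
  | zero => simp
  | succ r ih =>
    calc coeff n ((C (((k - 1).factorial : ℚ))⁻¹ * T ^ (k - 1)) ^ (r + 1) * D⁻¹)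
        = coeff n ((C (((k - 1).factorial : ℚ))⁻¹ * T ^ (k - 1)) *
            ((C (((k - 1).factorial : ℚ))⁻¹ * T ^ (k - 1)) ^ r * D⁻¹)) := by
          rw [← mul_assoc, ← pow_succ']
      _ ≤ coeff n ((C (((k - 1).factorial : ℚ))⁻¹ * T ^ (k - 1)) * D⁻¹) :=
          coeff_mul_le (fun m => ih m) hGnn n
      _ ≤ coeff n D⁻¹ := hstep n

lemma deriv_T (hk : 2 ≤ k) (hT0 : constantCoeff T = 0)
    (hT : T = X + C ((k.factorial : ℚ))⁻¹ * T ^ k)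
    (hD : D = 1 - C (((k - 1).factorial : ℚ))⁻¹ * T ^ (k - 1)) :
    d⁄dX ℚ T = D⁻¹ := by
  have hDc : constantCoeff D ≠ 0 := by
    rw [D_const hk hT0 hD]; norm_num
  have hDU : D * D⁻¹ = 1 := PowerSeries.mul_inv_cancel _ hDc
  have key : d⁄dX ℚ T * D = 1 := by
    have hstep : d⁄dX ℚ T = 1 + C (((k - 1).factorial : ℚ))⁻¹ * T ^ (k - 1) * d⁄dX ℚ T := by
      conv_lhs => rw [hT]
      rw [map_add, derivative_X]
      congr 1
      rw [smul_eq_C_mul _ ((k.factorial : ℚ))⁻¹ |>.symm, Derivation.map_smul,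
        Derivation.leibniz_pow, smul_eq_mul, nsmul_eq_mul, smul_eq_C_mul]
      have hc : C ((k.factorial : ℚ))⁻¹ * (k : PowerSeries ℚ)
          = C (((k - 1).factorial : ℚ))⁻¹ := by
        rw [← map_natCast C k, ← map_mul]
        congr 1
        have hkf : k.factorial = k * (k - 1).factorial := by
          rcases Nat.exists_eq_add_of_le hk with ⟨j, rfl⟩
          rw [show 2 + j = (1 + j) + 1 by omega, Nat.factorial_succ,
            show 1 + j + 1 - 1 = 1 + j by omega]
        rw [hkf]
        push_cast
        rw [mul_comm]
        field_simp
      linear_combination (T ^ (k - 1) * d⁄dX ℚ T) * hc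
    rw [hD]
    linear_combination hstep
  calc d⁄dX ℚ T = d⁄dX ℚ T * (D * D⁻¹) := by rw [hDU, mul_one]
    _ = (d⁄dX ℚ T * D) * D⁻¹ := by ring
    _ = D⁻¹ := by rw [key, one_mul]

lemma coeff_pow_deriv (hdT : d⁄dX ℚ T = D⁻¹) (i n : ℕ) :
    coeff (n + 1) (T ^ i) * (n + 1) = (i : ℚ) * coeff n (T ^ (i - 1) * D⁻¹) := by
  have h := coeff_derivative (T ^ i) n
  rw [Derivation.leibniz_pow, hdT, smul_eq_mul, nsmul_eq_mul,
    ← map_natCast C i, coeff_C_mul] at h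
  push_cast
  linarith [h]

end PhyloAux

open PhyloAux in
/-- Let `k ≥ 2`, let `T` be the unique power series over `ℚ` with constant coefficient `0`
satisfying `T = X + T^k/k!`, let `D = 1 - T^(k-1)/(k-1)!` and `M₀ = T · D⁻¹`.
Then for every polynomial `p ∈ ℚ[x]`, the ratio `([X^n] p(T)) / ([X^n] M₀)` tends to `0`
as `n → ∞` along integers `n ≡ 1 (mod k-1)`, i.e. along `n = s(k-1)+1` as `s → ∞`. -/
theorem phylo_polynomial_negligible (k : ℕ) (hk : 2 ≤ k) (T : PowerSeries ℚ)
    (hT0 : constantCoeff T = 0)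
    (hT : T = X + C ((k.factorial : ℚ))⁻¹ * T ^ k)
    (D M₀ : PowerSeries ℚ)
    (hD : D = 1 - C (((k - 1).factorial : ℚ))⁻¹ * T ^ (k - 1))
    (hM : M₀ = T * D⁻¹)
    (p : Polynomial ℚ) :
    Filter.Tendsto
      (fun s : ℕ =>
        ((coeff (s * (k - 1) + 1) (Polynomial.aeval T p) : ℚ) : ℝ) /
          ((coeff (s * (k - 1) + 1) M₀ : ℚ) : ℝ))
      Filter.atTop (nhds 0) := by
  set m : ℕ := k - 1 with hm
  have hm1 : 1 ≤ m := by omega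
  have hTnn : ∀ n, 0 ≤ coeff n T := T_nonneg hk hT0 hT
  have hUnn : ∀ n, 0 ≤ coeff n D⁻¹ := U_nonneg hk hT0 hD hTnn
  have hMnn : ∀ n, 0 ≤ coeff n M₀ := by
    intro n; rw [hM]; exact coeff_mul_nonneg hTnn hUnn n
  have hdT : d⁄dX ℚ T = D⁻¹ := deriv_T hk hT0 hT hD
  have hmf1 : (1 : ℚ) ≤ (m.factorial : ℚ) := by have := m.factorial_pos; exact_mod_cast this
  -- X ≤ T coefficientwise
  have hXle : ∀ n, coeff n (X : PowerSeries ℚ) ≤ coeff n T := by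
    intro n
    conv_rhs => rw [hT]
    rw [map_add, coeff_C_mul]
    have : 0 ≤ ((k.factorial : ℚ))⁻¹ * coeff n (T ^ k) :=
      mul_nonneg (by positivity) (coeff_pow_nonneg (fun j _ => hTnn j) _)
    linarith
  -- the U-to-M₀ inequality
  have hUM : ∀ n : ℕ, coeff n D⁻¹ ≤ coeff (n + 1) M₀ := by
    intro n
    have h1 : coeff n D⁻¹ = coeff (n + 1) (D⁻¹ * X) := by
      rw [mul_comm, coeff_succ_X_mul]
    rw [h1, hM, mul_comm T]
    exact coeff_mul_le hXle hUnn (n + 1)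
  -- T^(m*r) * D⁻¹ ≤ m!^r * D⁻¹
  have hiter : ∀ r n : ℕ, coeff n (T ^ (m * r) * D⁻¹) ≤
      (m.factorial : ℚ) ^ r * coeff n D⁻¹ := by
    intro r n
    have h := iter_le hk hT0 hD hTnn r n
    rw [mul_pow, ← map_pow, ← pow_mul, mul_assoc, coeff_C_mul] at h
    have hpos : (0:ℚ) < (m.factorial : ℚ) ^ r := by positivity
    rw [← mul_le_mul_iff_right₀ hpos] at h
    calc coeff n (T ^ (m * r) * D⁻¹)
        = (m.factorial : ℚ) ^ r * ((((m.factorial : ℚ))⁻¹) ^ r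
            * coeff n (T ^ (m * r) * D⁻¹)) := by
          rw [← mul_assoc, ← mul_pow, mul_inv_cancel₀ (by positivity), one_pow, one_mul]
      _ ≤ (m.factorial : ℚ) ^ r * coeff n D⁻¹ := h
  -- per-exponent bound
  have claim : ∀ s i : ℕ, coeff (s * m + 1) (T ^ i) * ((s * m + 1 : ℕ) : ℚ) ≤
      ((i : ℚ) * (m.factorial : ℚ) ^ i) * coeff (s * m + 1) M₀ := by
    intro s i
    rcases Nat.eq_zero_or_pos i with rfl | hi
    · have : coeff (s * m + 1) ((T : PowerSeries ℚ) ^ 0) = 0 := by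
        rw [pow_zero, coeff_one, if_neg (by omega)]
      rw [this]
      simp
    by_cases hdvd : m ∣ (i - 1)
    · obtain ⟨r, hr⟩ := hdvd
      have h1 : coeff (s * m + 1) (T ^ i) * ((s * m + 1 : ℕ) : ℚ)
          = (i : ℚ) * coeff (s * m) (T ^ (i - 1) * D⁻¹) := by
        have := coeff_pow_deriv hdT i (s * m)
        rw [← this]
        push_cast
        ring
      rw [h1, hr]
      have h2 : coeff (s * m) (T ^ (m * r) * D⁻¹)
          ≤ (m.factorial : ℚ) ^ r * coeff (s * m) D⁻¹ := hiter r (s * m)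
      have h3 : coeff (s * m) D⁻¹ ≤ coeff (s * m + 1) M₀ := hUM (s * m)
      have hri : r ≤ i := by
        have : r ≤ m * r := Nat.le_mul_of_pos_left r (by omega)
        omega
      have h4 : (m.factorial : ℚ) ^ r ≤ (m.factorial : ℚ) ^ i :=
        pow_le_pow_right₀ hmf1 hri
      have hUnn' := hUnn (s * m)
      have hMnn' := hMnn (s * m + 1)
      have hinn : (0:ℚ) ≤ (i : ℚ) := by positivity
      calc (i : ℚ) * coeff (s * m) (T ^ (m * r) * D⁻¹)
          ≤ (i : ℚ) * ((m.factorial : ℚ) ^ r * coeff (s * m + 1) M₀) := by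
            refine mul_le_mul_of_nonneg_left ?_ hinn
            calc coeff (s * m) (T ^ (m * r) * D⁻¹)
                ≤ (m.factorial : ℚ) ^ r * coeff (s * m) D⁻¹ := h2
              _ ≤ (m.factorial : ℚ) ^ r * coeff (s * m + 1) M₀ :=
                  mul_le_mul_of_nonneg_left h3 (by positivity)
        _ ≤ ((i : ℚ) * (m.factorial : ℚ) ^ i) * coeff (s * m + 1) M₀ := by
            rw [mul_assoc]
            refine mul_le_mul_of_nonneg_left ?_ hinn
            exact mul_le_mul_of_nonneg_right h4 hMnn'
    · -- coefficient vanishes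
      have hz : coeff (s * m + 1) (T ^ i) = 0 := by
        refine Tpow_support hk hT0 hT i (s * m + 1) ?_
        intro hcast
        apply hdvd
        have h1 : (s * m + 1) ≡ i [MOD m] := by
          have := (ZMod.natCast_eq_natCast_iff (s * m + 1) i (k - 1)).mp hcast
          rwa [← hm] at this
        have h2 : 1 ≡ (s * m + 1) [MOD m] := by
          refine (Nat.modEq_iff_dvd' (by omega)).mpr ?_
          exact ⟨s, by ring_nf; omega⟩
        have h3 : 1 ≡ i [MOD m] := h2.trans h1
        exact (Nat.modEq_iff_dvd' (by omega)).mp h3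
      rw [hz, zero_mul]
      have := hMnn (s * m + 1)
      positivity
  -- numerator bound
  set d : ℕ := p.natDegree with hd
  set Cst : ℚ := ∑ i ∈ Finset.range (d + 1), |p.coeff i| * ((i : ℚ) * (m.factorial : ℚ) ^ i)
    with hCst
  have hCstnn : 0 ≤ Cst := by
    refine Finset.sum_nonneg fun i _ => ?_
    positivity
  have hnum : ∀ s : ℕ, |coeff (s * m + 1) (Polynomial.aeval T p)| * ((s * m + 1 : ℕ) : ℚ)
      ≤ Cst * coeff (s * m + 1) M₀ := by
    intro s
    have habs : |coeff (s * m + 1) (Polynomial.aeval T p)|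
        ≤ ∑ i ∈ Finset.range (d + 1), |p.coeff i| * coeff (s * m + 1) (T ^ i) := by
      rw [Polynomial.aeval_eq_sum_range, map_sum]
      refine (Finset.abs_sum_le_sum_abs _ _).trans ?_
      refine Finset.sum_le_sum fun i _ => ?_
      rw [map_smul, smul_eq_mul, abs_mul, abs_of_nonneg (coeff_pow_nonneg (fun j _ => hTnn j) i)]
    have hn0 : (0:ℚ) ≤ ((s * m + 1 : ℕ) : ℚ) := by positivity
    calc |coeff (s * m + 1) (Polynomial.aeval T p)| * ((s * m + 1 : ℕ) : ℚ)
        ≤ (∑ i ∈ Finset.range (d + 1), |p.coeff i| * coeff (s * m + 1) (T ^ i))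
            * ((s * m + 1 : ℕ) : ℚ) := mul_le_mul_of_nonneg_right habs hn0
      _ = ∑ i ∈ Finset.range (d + 1),
            |p.coeff i| * (coeff (s * m + 1) (T ^ i) * ((s * m + 1 : ℕ) : ℚ)) := by
          rw [Finset.sum_mul]
          exact Finset.sum_congr rfl fun i _ => by ring
      _ ≤ ∑ i ∈ Finset.range (d + 1),
            |p.coeff i| * (((i : ℚ) * (m.factorial : ℚ) ^ i) * coeff (s * m + 1) M₀) :=
          Finset.sum_le_sum fun i _ =>
            mul_le_mul_of_nonneg_left (claim s i) (abs_nonneg _)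
      _ = Cst * coeff (s * m + 1) M₀ := by
          rw [hCst, Finset.sum_mul]
          exact Finset.sum_congr rfl fun i _ => by ring
  -- ratio bound
  have hratio : ∀ s : ℕ,
      |coeff (s * m + 1) (Polynomial.aeval T p) / coeff (s * m + 1) M₀|
        ≤ Cst / ((s * m + 1 : ℕ) : ℚ) := by
    intro s
    have hnpos : (0:ℚ) < ((s * m + 1 : ℕ) : ℚ) := by positivity
    rcases eq_or_lt_of_le (hMnn (s * m + 1)) with hMc | hMc
    · have h0 : coeff (s * m + 1) (Polynomial.aeval T p) = 0 := by
        have := hnum s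
        rw [← hMc, mul_zero] at this
        have habs0 : |coeff (s * m + 1) (Polynomial.aeval T p)| ≤ 0 := by
          nlinarith [abs_nonneg (coeff (s * m + 1) (Polynomial.aeval T p))]
        have := abs_nonneg (coeff (s * m + 1) (Polynomial.aeval T p))
        rw [abs_eq_zero.mp (le_antisymm habs0 this)]
      rw [h0, zero_div, abs_zero]
      positivity
    · rw [abs_div, abs_of_pos hMc, div_le_div_iff₀ hMc hnpos]
      have := hnum s
      linarith
  -- pass to ℝ and squeeze
  have key : ∀ s : ℕ,
      ‖((coeff (s * m + 1) (Polynomial.aeval T p) : ℚ) : ℝ)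
          / ((coeff (s * m + 1) M₀ : ℚ) : ℝ)‖
        ≤ (Cst : ℝ) / ((s * m + 1 : ℕ) : ℝ) := by
    intro s
    rw [← Rat.cast_div, Real.norm_eq_abs, ← Rat.cast_abs]
    have := hratio s
    calc ((|coeff (s * m + 1) (Polynomial.aeval T p) / coeff (s * m + 1) M₀| : ℚ) : ℝ)
        ≤ ((Cst / ((s * m + 1 : ℕ) : ℚ) : ℚ) : ℝ) := by exact_mod_cast this
      _ = (Cst : ℝ) / ((s * m + 1 : ℕ) : ℝ) := by push_cast; ring
  refine squeeze_zero_norm key ?_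
  · refine Filter.Tendsto.div_atTop tendsto_const_nhds ?_
    refine tendsto_natCast_atTop_atTop.comp ?_
    refine Filter.tendsto_atTop_mono (fun s => ?_) Filter.tendsto_id
    calc (id s : ℕ) = s * 1 := by simp
      _ ≤ s * m := Nat.mul_le_mul_left s hm1
      _ ≤ s * m + 1 := Nat.le_succ _
end

section
/- Let k ≥ 2 be an integer, let T = T_k be the unique formal power series over ℚ with constant coefficient 0 satisfying T = X + T^k/k!, and let D = 1 − T^{k−1}/(k−1)!. Then for every integer i ≥ 0 there exists a polynomial p ∈ ℚ[x] such that T^{k^i} · D⁻¹ = p(T) + (k−1)!^{c_i} · T · D⁻¹ in ℚ[[X]], where c_i = (k^i − 1)/(k − 1). -/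
open PowerSeries

/-- Let `k ≥ 2`, let `T` be the unique power series over `ℚ` with constant coefficient `0`
satisfying `T = X + T^k/k!`, and `D = 1 - T^(k-1)/(k-1)!`. Then for every `i ≥ 0` there
is a polynomial `p ∈ ℚ[x]` with `T^(k^i) · D⁻¹ = p(T) + (k-1)!^(cᵢ) · T · D⁻¹`,
where `cᵢ = (k^i - 1)/(k - 1)`. -/
theorem phylo_split_off_polynomial (k : ℕ) (hk : 2 ≤ k) (T : PowerSeries ℚ)
    (hT0 : constantCoeff T = 0)
    (hT : T = X + C ((k.factorial : ℚ))⁻¹ * T ^ k)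
    (D : PowerSeries ℚ)
    (hD : D = 1 - C (((k - 1).factorial : ℚ))⁻¹ * T ^ (k - 1))
    (i : ℕ) :
    ∃ p : Polynomial ℚ,
      T ^ (k ^ i) * D⁻¹ =
        Polynomial.aeval T p +
          C ((((k - 1).factorial : ℚ)) ^ ((k ^ i - 1) / (k - 1))) * T * D⁻¹ := by
  have hfac : ((k - 1).factorial : ℚ) ≠ 0 := Nat.cast_ne_zero.mpr (Nat.factorial_ne_zero _)
  have hDc : constantCoeff D = 1 := by
    rw [hD]
    simp [hT0, zero_pow (by omega : k - 1 ≠ 0)]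
  have hDinv : D * D⁻¹ = 1 :=
    PowerSeries.mul_inv_cancel _ (by rw [hDc]; exact one_ne_zero)
  have hTk : T ^ (k - 1) = C ((k - 1).factorial : ℚ) * (1 - D) := by
    rw [hD, sub_sub_cancel, ← mul_assoc, ← map_mul, mul_inv_cancel₀ hfac, map_one, one_mul]
  have main : ∀ m : ℕ, ∃ p : Polynomial ℚ,
      T ^ (1 + m * (k - 1)) * D⁻¹ =
        Polynomial.aeval T p + C (((k - 1).factorial : ℚ) ^ m) * T * D⁻¹ := by
    intro m
    induction m with
    | zero => exact ⟨0, by simp⟩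
    | succ n ih =>
      obtain ⟨p, hp⟩ := ih
      refine ⟨Polynomial.C ((k - 1).factorial : ℚ) * p
        - Polynomial.C ((k - 1).factorial : ℚ) * Polynomial.X ^ (1 + n * (k - 1)), ?_⟩
      have h1 : T ^ (1 + (n + 1) * (k - 1)) = T ^ (1 + n * (k - 1)) * T ^ (k - 1) := by
        rw [← pow_add]; ring_nf
      have key : T ^ (1 + (n + 1) * (k - 1)) * D⁻¹ =
          C ((k - 1).factorial : ℚ) * (T ^ (1 + n * (k - 1)) * D⁻¹)
            - C ((k - 1).factorial : ℚ) * T ^ (1 + n * (k - 1)) := by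
        rw [h1, hTk]
        have : T ^ (1 + n * (k - 1)) * (C ((k - 1).factorial : ℚ) * (1 - D)) * D⁻¹
            = C ((k - 1).factorial : ℚ) * (T ^ (1 + n * (k - 1)) * D⁻¹)
              - C ((k - 1).factorial : ℚ) * (T ^ (1 + n * (k - 1)) * (D * D⁻¹)) := by
          ring
        rw [this, hDinv, mul_one]
      rw [key, hp]
      simp only [map_sub, map_mul, map_pow, Polynomial.aeval_C, Polynomial.aeval_X,
        Polynomial.aeval_mul, PowerSeries.algebraMap_apply, Algebra.algebraMap_self,
        RingHom.id_apply]
      push_cast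
      ring
  have hdvd : (k - 1) ∣ (k ^ i - 1) := by
    simpa using Nat.sub_dvd_pow_sub_pow k 1 i
  have hpos : 1 ≤ k ^ i := Nat.one_le_pow _ _ (by omega)
  set c := (k ^ i - 1) / (k - 1) with hc
  have heq : k ^ i = 1 + c * (k - 1) := by
    rw [hc, Nat.div_mul_cancel hdvd]; omega
  obtain ⟨p, hp⟩ := main c
  exact ⟨p, by rw [heq]; exact hp⟩
end

section
/- Let k ≥ 2 be an integer, let T = T_k be the unique formal power series over ℚ with constant coefficient 0 satisfying T = X + T^k/k!, let D = 1 − T^{k−1}/(k−1)!, and for each integer i ≥ 0 let M_i = (1/k!^{c_i}) · T^{k^i} · D⁻¹, where c_i = (k^i − 1)/(k − 1). Then for every fixed integer i ≥ 1, the ratio ([X^n] M_i) / ([X^n] M_0) tends to 1/k^{c_i} = 1/k^{(k^i − 1)/(k−1)} as n tends to infinity along integers n with n ≡ 1 (mod k−1). -/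
open PowerSeries

section PhyloAux

private lemma myvanish (T : PowerSeries ℚ) (hT0 : constantCoeff T = 0)
    {m n : ℕ} (hnm : n < m) : coeff n (T ^ m) = 0 := by
  have h : (X : ℚ⟦X⟧) ^ m ∣ T ^ m := pow_dvd_pow_of_dvd (X_dvd_iff.mpr hT0) m
  exact X_pow_dvd_iff.mp h n hnm

private lemma myrec (k : ℕ) (T : PowerSeries ℚ)
    (hT : T = X + C ((k.factorial : ℚ))⁻¹ * T ^ k) (m : ℕ) :
    T ^ (m + 1) = X * T ^ m + C ((k.factorial : ℚ))⁻¹ * T ^ (m + k) := by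
  calc T ^ (m+1) = T ^ m * T := pow_succ T m
  _ = T ^ m * (X + C ((k.factorial : ℚ))⁻¹ * T ^ k) := by rw [← hT]
  _ = X * T ^ m + C ((k.factorial : ℚ))⁻¹ * T ^ (m + k) := by ring

private lemma mycoeff (k' : ℕ) (T : PowerSeries ℚ) (hT0 : constantCoeff T = 0)
    (hT : T = X + C (((k'+2).factorial : ℚ))⁻¹ * T ^ (k'+2)) :
    ∀ N m j : ℕ, m + 2*j*(k'+1) = N →
    coeff (m + 1 + j*(k'+1)) (T ^ (m+1)) =
      ((m+1 : ℚ) * ((m + j*(k'+2)).choose j)) /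
        ((m + 1 + j*(k'+1) : ℕ) * ((k'+2).factorial : ℚ)^j) := by
  intro N
  induction N using Nat.strong_induction_on with
  | _ N ih =>
  intro m j hN
  have q0 : ((k'+2).factorial : ℚ) ≠ 0 := by exact_mod_cast (k'+2).factorial_ne_zero
  rw [myrec (k'+2) T hT, map_add, coeff_C_mul,
    show m+1+j*(k'+1) = (m + j*(k'+1)) + 1 from by ring, coeff_succ_X_mul]
  rcases m with _ | b
  · rcases j with _ | j''
    · have e0 : coeff (0 + 0*(k'+1) + 1) ((T:ℚ⟦X⟧) ^ (0 + (k'+2))) = 0 :=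
        myvanish T hT0 (by omega)
      rw [e0, mul_zero, add_zero]
      simp
    · have e1 : coeff (0 + (j''+1)*(k'+1)) ((T:ℚ⟦X⟧) ^ 0) = 0 := by
        rw [pow_zero, coeff_one]
        have : 0 + (j''+1)*(k'+1) ≠ 0 := by positivity
        simp [this]
      have e2 : (0:ℕ) + (j''+1)*(k'+1) + 1 = (k'+1) + 1 + j''*(k'+1) := by ring
      have e3 : (0:ℕ) + (k'+2) = (k'+1) + 1 := by ring
      have hmeas : (k'+1) + 2*j''*(k'+1) < N := by
        have r1 : 2*(j''+1)*(k'+1) = 2*j''*(k'+1) + 2*(k'+1) := by ring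
        omega
      rw [e1, e2, e3, ih _ hmeas (k'+1) j'' rfl]
      have e4 : (0:ℕ) + (j''+1)*(k'+2) = (k'+1 + j''*(k'+2)) + 1 := by ring
      rw [e4]
      have hch := Nat.add_one_mul_choose_eq (k'+1 + j''*(k'+2)) j''
      have hj1 : ((j'':ℚ)+1) ≠ 0 := by positivity
      have hB : ((((k'+1 + j''*(k'+2)) + 1).choose (j''+1) : ℕ) : ℚ)
          = ((k':ℚ)+2) * (((k'+1 + j''*(k'+2)).choose j'' : ℕ) : ℚ) := by
        apply mul_right_cancel₀ hj1
        have h0 := congrArg (Nat.cast : ℕ → ℚ) hch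
        push_cast at h0
        linear_combination -h0
      rw [hB]
      have d1 : ((k'+1+1+j''*(k'+1) : ℕ) : ℚ) ≠ 0 := by positivity
      have d2 : ((0+1+(j''+1)*(k'+1) : ℕ) : ℚ) ≠ 0 := by positivity
      field_simp
      push_cast
      ring
  · rcases j with _ | j''
    · have e0 : coeff (b+1 + 0*(k'+1) + 1) ((T:ℚ⟦X⟧) ^ (b+1 + (k'+2))) = 0 :=
        myvanish T hT0 (by omega)
      rw [e0, mul_zero, add_zero, ih _ (by omega) b 0 rfl]
      simp [Nat.choose_zero_right]
      have d1 : ((b:ℚ)+1) ≠ 0 := by positivity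
      have d2 : ((b:ℚ)+1+1) ≠ 0 := by positivity
      field_simp
    · have hm1 : b + 2*(j''+1)*(k'+1) < N := by omega
      have hm2 : (b+k'+2) + 2*j''*(k'+1) < N := by
        have r1 : 2*(j''+1)*(k'+1) = 2*j''*(k'+1) + 2*(k'+1) := by ring
        omega
      rw [ih _ hm1 b (j''+1) rfl]
      have e2 : b+1 + (j''+1)*(k'+1) + 1 = (b+k'+2) + 1 + j''*(k'+1) := by ring
      have e3 : b+1 + (k'+2) = (b+k'+2) + 1 := by ring
      rw [e2, e3, ih _ hm2 (b+k'+2) j'' rfl]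
      have e4 : b+k'+2 + j''*(k'+2) = b + (j''+1)*(k'+2) := by ring
      rw [e4]
      set c0 := b + (j''+1)*(k'+2) with hc0
      have e5 : b+1 + (j''+1)*(k'+2) = c0 + 1 := by rw [hc0]; ring
      rw [e5, Nat.choose_succ_succ' c0 j'']
      have hf2 := Nat.choose_succ_right_eq c0 j''
      have e6 : c0 - j'' = b+1+(j''+1)*(k'+1) := by
        rw [hc0]
        have r : (j''+1)*(k'+2) = (j''+1)*(k'+1) + (j''+1) := by ring
        omega
      rw [e6] at hf2
      have h0 := congrArg (Nat.cast : ℕ → ℚ) hf2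
      push_cast at h0
      have hj1 : ((j'':ℚ)+1) ≠ 0 := by positivity
      have hA : ((c0.choose (j''+1) : ℕ) : ℚ)
          = ((b:ℚ)+1+((j'':ℚ)+1)*((k':ℚ)+1)) * ((c0.choose j'' : ℕ) : ℚ) / ((j'':ℚ)+1) := by
        rw [eq_div_iff hj1]
        linear_combination h0
      push_cast
      rw [hA]
      have d1 : ((b:ℚ)+1+1+((j'':ℚ)+1)*((k':ℚ)+1)) ≠ 0 := by positivity
      have d2 : ((b:ℚ)+1+((j'':ℚ)+1)*((k':ℚ)+1)) ≠ 0 := by positivity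
      have d3 : ((b:ℚ)+((k':ℚ)+2)+1+(j'':ℚ)*((k':ℚ)+1)) ≠ 0 := by positivity
      field_simp
      ring

private lemma myD (k' : ℕ) (T : PowerSeries ℚ)
    (hT : T = X + C (((k'+2).factorial : ℚ))⁻¹ * T ^ (k'+2))
    (D : PowerSeries ℚ)
    (hD : D = 1 - C (((k'+1).factorial : ℚ))⁻¹ * T ^ (k'+1)) :
    D * d⁄dX ℚ T = 1 := by
  have hs : (((k'+2 : ℕ)) : ℚ⟦X⟧) = C (((k'+2 : ℕ)) : ℚ) := (map_natCast C (k'+2)).symm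
  have harith : (((k'+2).factorial : ℚ))⁻¹ * (((k'+2:ℕ)) : ℚ) = (((k'+1).factorial : ℚ))⁻¹ := by
    rw [Nat.factorial_succ]
    have h1 : ((k'+1).factorial : ℚ) ≠ 0 := by exact_mod_cast (k'+1).factorial_ne_zero
    have h2 : ((k'+2 : ℕ) : ℚ) ≠ 0 := by positivity
    field_simp
    push_cast
    ring
  have hdT : d⁄dX ℚ T = 1 + C (((k'+1).factorial : ℚ))⁻¹ * T ^ (k'+1) * d⁄dX ℚ T := by
    nth_rewrite 1 [hT]
    rw [map_add, derivative_X, Derivation.leibniz, derivative_C, smul_zero, add_zero,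
      Derivation.leibniz_pow]
    simp only [smul_eq_mul, nsmul_eq_mul, show k'+2-1 = k'+1 from rfl]
    rw [hs, ← mul_assoc, ← mul_assoc, ← map_mul, harith, mul_assoc]
  rw [hD, sub_mul, one_mul]
  nth_rewrite 1 [hdT]
  ring

private lemma coeffTD (k' : ℕ) (T : PowerSeries ℚ) (hT0 : constantCoeff T = 0)
    (hT : T = X + C (((k'+2).factorial : ℚ))⁻¹ * T ^ (k'+2)) (m j : ℕ) :
    coeff (m + j*(k'+1)) (T ^ m * d⁄dX ℚ T) =
      (((m + j*(k'+2)).choose j : ℕ) : ℚ) / ((k'+2).factorial : ℚ)^j := by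
  have hm1 : ((m:ℚ)+1) ≠ 0 := by positivity
  have hTd : T ^ m * d⁄dX ℚ T = C (((m:ℚ)+1))⁻¹ * d⁄dX ℚ (T^(m+1)) := by
    rw [Derivation.leibniz_pow]
    simp only [smul_eq_mul, nsmul_eq_mul, Nat.add_sub_cancel]
    rw [show (((m+1 : ℕ)) : ℚ⟦X⟧) = C (((m+1:ℕ)) : ℚ) from (map_natCast C (m+1)).symm,
      ← mul_assoc, ← map_mul]
    have : (((m:ℚ))+1)⁻¹ * (((m+1:ℕ)) : ℚ) = 1 := by push_cast; field_simp
    rw [this, map_one, one_mul]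
  rw [hTd, coeff_C_mul, coeff_derivative,
    show m + j*(k'+1) + 1 = m + 1 + j*(k'+1) from by ring,
    mycoeff k' T hT0 hT _ m j rfl]
  have q0 : ((k'+2).factorial : ℚ) ≠ 0 := by exact_mod_cast (k'+2).factorial_ne_zero
  have d1 : ((m+1+j*(k'+1) : ℕ) : ℚ) ≠ 0 := by positivity
  push_cast
  field_simp
  ring

private lemma ratio_eq (c s n' : ℕ) (hcs : c ≤ s) (hsn : s ≤ n') :
    ((Nat.choose (n'-c) (s-c) : ℕ) : ℝ) / ((Nat.choose n' s : ℕ) : ℝ)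
      = ((s.descFactorial c : ℕ) : ℝ) / ((n'.descFactorial c : ℕ) : ℝ) := by
  have h1 := Nat.choose_mul_factorial_mul_factorial (show s-c ≤ n'-c by omega)
  rw [show n'-c-(s-c) = n'-s by omega] at h1
  have h2 := Nat.factorial_mul_descFactorial (show c ≤ n' by omega)
  have h3 := Nat.factorial_mul_descFactorial (show c ≤ s by omega)
  have h4 := Nat.choose_mul_factorial_mul_factorial hsn
  have h1' := congrArg (Nat.cast : ℕ → ℝ) h1
  have h2' := congrArg (Nat.cast : ℕ → ℝ) h2
  have h3' := congrArg (Nat.cast : ℕ → ℝ) h3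
  have h4' := congrArg (Nat.cast : ℕ → ℝ) h4
  push_cast at h1' h2' h3' h4'
  have hB : ((Nat.choose n' s : ℕ) : ℝ) ≠ 0 := by
    exact_mod_cast (Nat.choose_pos hsn).ne'
  have hY : ((n'.descFactorial c : ℕ) : ℝ) ≠ 0 := by
    have : n'.descFactorial c ≠ 0 := by
      intro h0
      exact absurd (Nat.descFactorial_eq_zero_iff_lt.mp h0) (by omega)
    exact_mod_cast this
  have hF : (((s-c).factorial : ℝ) * ((n'-s).factorial : ℝ)) ≠ 0 := by positivity
  rw [div_eq_div_iff hB hY]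
  apply mul_right_cancel₀ hF
  linear_combination ((n'.descFactorial c : ℝ)) * h1' + h2'
    - ((Nat.choose n' s : ℝ) * ((n'-s).factorial : ℝ)) * h3' - h4'

open Filter in
private lemma tendsto_frac (K a b : ℝ) (hK : 0 < K) :
    Tendsto (fun x : ℝ => (x + a)/(K*x + b)) atTop (nhds K⁻¹) := by
  have ha : Tendsto (fun x:ℝ => a/x) atTop (nhds 0) := tendsto_const_nhds.div_atTop tendsto_id
  have hb : Tendsto (fun x:ℝ => b/x) atTop (nhds 0) := tendsto_const_nhds.div_atTop tendsto_id
  have h1 : Tendsto (fun x:ℝ => (1 + a/x)/(K + b/x)) atTop (nhds ((1+0)/(K+0))) :=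
    (tendsto_const_nhds.add ha).div (tendsto_const_nhds.add hb) (by positivity)
  have h2 : ((1:ℝ)+0)/(K+0) = K⁻¹ := by simp
  rw [h2] at h1
  apply h1.congr'
  filter_upwards [eventually_gt_atTop (0:ℝ)] with x hx
  have hx0 : x ≠ 0 := ne_of_gt hx
  rw [show x + a = x * (1 + a/x) from by field_simp, show K*x + b = x * (K + b/x) from by
    field_simp, mul_div_mul_left _ _ hx0]

open Filter in
private lemma tendsto_dF (c K : ℕ) (hK : 2 ≤ K) :
    Tendsto (fun s : ℕ => ((s.descFactorial c : ℕ) : ℝ)/(((s*K+1).descFactorial c : ℕ) : ℝ))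
      atTop (nhds (((K:ℝ)^c)⁻¹)) := by
  have hKR : (0:ℝ) < K := by positivity
  have main : Tendsto (fun s : ℕ => ∏ t ∈ Finset.range c,
      (((s:ℝ) + (-(t:ℝ)))/((K:ℝ)*(s:ℝ) + (1 - (t:ℝ))))) atTop (nhds (((K:ℝ)⁻¹)^c)) := by
    have := tendsto_finset_prod (Finset.range c) (fun t _ =>
      ((tendsto_frac K (-(t:ℝ)) (1-(t:ℝ)) hKR).comp tendsto_natCast_atTop_atTop))
    simpa using this
  rw [← inv_pow]
  apply main.congr'
  filter_upwards [eventually_ge_atTop c] with s hs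
  rw [Nat.descFactorial_eq_prod_range, Nat.descFactorial_eq_prod_range,
    Nat.cast_prod, Nat.cast_prod, ← Finset.prod_div_distrib]
  apply Finset.prod_congr rfl
  intro t ht
  have htc : t < c := Finset.mem_range.mp ht
  have h1 : ((s - t : ℕ) : ℝ) = (s:ℝ) + (-(t:ℝ)) := by
    have : t ≤ s := by omega
    push_cast [this]
    try ring
  have h2 : ((s*K + 1 - t : ℕ) : ℝ) = (K:ℝ)*(s:ℝ) + (1 - (t:ℝ)) := by
    have : t ≤ s*K + 1 := by nlinarith
    push_cast [this]
    ring
  rw [h1, h2]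

end PhyloAux

/-- Let `k ≥ 2`, `T` the unique power series over `ℚ` with constant coefficient `0`
satisfying `T = X + T^k/k!`, `D = 1 - T^(k-1)/(k-1)!`, and
`Mᵢ = (1/k!^(cᵢ)) · T^(k^i) · D⁻¹` with `cᵢ = (k^i-1)/(k-1)`. Then for every fixed
`i ≥ 1`, the ratio `([X^n] Mᵢ)/([X^n] M₀)` tends to `1/k^(cᵢ)` as `n → ∞` along
integers `n ≡ 1 (mod k-1)`, i.e. along `n = s(k-1)+1` as `s → ∞`. -/
theorem phylo_rank_at_least_prob (k : ℕ) (hk : 2 ≤ k) (T : PowerSeries ℚ)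
    (hT0 : constantCoeff T = 0)
    (hT : T = X + C ((k.factorial : ℚ))⁻¹ * T ^ k)
    (D : PowerSeries ℚ)
    (hD : D = 1 - C (((k - 1).factorial : ℚ))⁻¹ * T ^ (k - 1))
    (M : ℕ → PowerSeries ℚ)
    (hM : ∀ i : ℕ,
      M i = C (((k.factorial : ℚ) ^ ((k ^ i - 1) / (k - 1)))⁻¹) * T ^ (k ^ i) * D⁻¹)
    (i : ℕ) (hi : 1 ≤ i) :
    Filter.Tendsto
      (fun s : ℕ =>
        ((coeff (s * (k - 1) + 1) (M i) : ℚ) : ℝ) /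
          ((coeff (s * (k - 1) + 1) (M 0) : ℚ) : ℝ))
      Filter.atTop (nhds (((k : ℝ) ^ ((k ^ i - 1) / (k - 1)))⁻¹)) := by
  obtain ⟨k', rfl⟩ : ∃ k', k = k'+2 := ⟨k-2, by omega⟩
  have e1 : k'+2-1 = k'+1 := rfl
  rw [e1] at hD
  simp only [e1] at hM ⊢
  have q0 : ((k'+2).factorial : ℚ) ≠ 0 := by exact_mod_cast (k'+2).factorial_ne_zero
  have hcD : constantCoeff D ≠ 0 := by
    rw [hD]
    simp [hT0]
  have hDinv : D⁻¹ = d⁄dX ℚ T := by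
    symm
    rw [PowerSeries.eq_inv_iff_mul_eq_one hcD, mul_comm]
    exact myD k' T hT D hD
  have gen : ∀ i' c' s : ℕ, (k'+2)^i' = c'*(k'+1)+1 → ((k'+2)^i' - 1)/(k'+1) = c' → c' ≤ s →
      coeff (s*(k'+1)+1) (M i')
        = (((k'+2).factorial : ℚ)^c')⁻¹ *
          ((((s*(k'+2)+1-c').choose (s-c') : ℕ) : ℚ) / ((k'+2).factorial : ℚ)^(s-c')) := by
    intro i' c' s hpow hdiv hcs
    rw [hM i', hdiv, hDinv, mul_assoc, coeff_C_mul,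
      show s*(k'+1)+1 = (k'+2)^i' + (s-c')*(k'+1) from by
        have r1 : (s-c')*(k'+1) + c'*(k'+1) = s*(k'+1) := by
          rw [← Nat.add_mul]; congr 1; omega
        omega,
      coeffTD k' T hT0 hT ((k'+2)^i') (s-c'),
      show (k'+2)^i' + (s-c')*(k'+2) = s*(k'+2)+1-c' from by
        have r1 : (s-c')*(k'+2) + c'*(k'+2) = s*(k'+2) := by
          rw [← Nat.add_mul]; congr 1; omega
        have r2 : c'*(k'+2) = c'*(k'+1) + c' := by ring
        omega]
  set c := ((k'+2)^i - 1)/(k'+1) with hc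
  have hex : ∀ m : ℕ, ∃ d, (k'+2)^m = d*(k'+1)+1 := by
    intro m
    induction m with
    | zero => exact ⟨0, by simp⟩
    | succ n ihn =>
      obtain ⟨d, hdn⟩ := ihn
      exact ⟨d*(k'+2)+1, by rw [pow_succ, hdn]; ring⟩
  obtain ⟨d, hd⟩ := hex i
  have hcd : c = d := by
    rw [hc, hd, Nat.add_sub_cancel, Nat.mul_div_cancel d (by omega)]
  have hdc : (k'+2)^i = c*(k'+1)+1 := by rw [hcd]; exact hd
  have hc0pow : (k'+2)^0 = 0*(k'+1)+1 := by simp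
  have hc0div : ((k'+2)^0 - 1)/(k'+1) = 0 := by simp
  apply Filter.Tendsto.congr' _ (tendsto_dF c (k'+2) (by omega))
  filter_upwards [Filter.eventually_ge_atTop c] with s hs
  have hsn : s ≤ s*(k'+2)+1 := by nlinarith
  rw [gen i c s hdc rfl hs, gen 0 0 s hc0pow hc0div (Nat.zero_le s)]
  rw [← ratio_eq c s (s*(k'+2)+1) hs hsn,
    show s*(k'+2)+1-0 = s*(k'+2)+1 from rfl, show s - 0 = s from rfl]
  have hA0 : ((((s*(k'+2)+1).choose s : ℕ)) : ℝ) ≠ 0 := by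
    exact_mod_cast (Nat.choose_pos hsn).ne'
  have hq0' : (((k'+2).factorial : ℕ) : ℝ) ≠ 0 := by
    exact_mod_cast (k'+2).factorial_ne_zero
  have hqs : (((k'+2).factorial : ℕ) : ℝ)^s
      = (((k'+2).factorial : ℕ) : ℝ)^c * (((k'+2).factorial : ℕ) : ℝ)^(s-c) := by
    rw [← pow_add]; congr 1; omega
  push_cast
  rw [hqs]
  field_simp
end

section
/- Let k ≥ 2 be an integer, let T = T_k be the unique formal power series over ℚ with constant coefficient 0 satisfying T = X + T^k/k!, let D = 1 − T^{k−1}/(k−1)!, and for each integer i ≥ 0 let M_i = (1/k!^{c_i}) · T^{k^i} · D⁻¹, where c_i = (k^i − 1)/(k − 1). Then for every fixed integer i ≥ 0, the ratio ([X^n] M_i − [X^n] M_{i+1}) / ([X^n] M_0) tends to P_{k,i} = 1/k^{c_i} − 1/k^{c_{i+1}} = 1/k^{c_i} − 1/k^{k·c_i + 1} as n tends to infinity along integers n with n ≡ 1 (mod k−1). -/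
open PowerSeries


lemma phylo_coeff (k : ℕ) (hk : 2 ≤ k) (T : PowerSeries ℚ)
    (hT0 : constantCoeff T = 0)
    (hT : T = X + C ((k.factorial : ℚ))⁻¹ * T ^ k)
    (D : PowerSeries ℚ)
    (hD : D = 1 - C (((k - 1).factorial : ℚ))⁻¹ * T ^ (k - 1)) :
    ∀ j m : ℕ, coeff (m + j * (k - 1)) (T ^ m * D⁻¹)
      = (Nat.choose (m + j * (k - 1) + j) j : ℚ) / (k.factorial : ℚ) ^ j := by
  obtain ⟨K, rfl⟩ : ∃ K, k = K + 1 := ⟨k - 1, by omega⟩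
  have hK : 1 ≤ K := by omega
  simp only [Nat.add_sub_cancel] at hD ⊢
  have hD0 : constantCoeff D = 1 := by
    rw [hD]
    simp [hT0, zero_pow (by omega : K ≠ 0)]
  have hDinv : D * D⁻¹ = 1 := PowerSeries.mul_inv_cancel D (by rw [hD0]; norm_num)
  have hvanish : ∀ n m : ℕ, n < m → coeff n (T ^ m * D⁻¹) = 0 := by
    intro n m hnm
    have hXd : (X : PowerSeries ℚ) ^ m ∣ T ^ m * D⁻¹ :=
      Dvd.dvd.mul_right (pow_dvd_pow_of_dvd (X_dvd_iff.mpr hT0) m) _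
    exact (X_pow_dvd_iff.mp hXd) n hnm
  have hrec : ∀ m : ℕ, T ^ (m + 1) * D⁻¹
      = X * (T ^ m * D⁻¹) + C (((K+1).factorial : ℚ))⁻¹ * (T ^ (m + (K+1)) * D⁻¹) := by
    intro m
    have h1 : T ^ (m + 1) = T ^ m * (X + C (((K+1).factorial : ℚ))⁻¹ * T ^ (K+1)) := by
      rw [pow_succ, ← hT]
    rw [h1, pow_add]
    ring
  have hrec0 : D⁻¹ = 1 + C ((K.factorial : ℚ))⁻¹ * (T ^ K * D⁻¹) := by
    linear_combination hDinv - D⁻¹ * hD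
  intro j
  induction j using Nat.strong_induction_on with
  | _ j ih =>
    intro m
    induction m with
    | zero =>
      cases j with
      | zero =>
        simp [coeff_zero_eq_constantCoeff, PowerSeries.constantCoeff_inv, hD0]
      | succ j' =>
        have hn : (j' + 1) * K = K + j' * K := by ring
        rw [Nat.zero_add, pow_zero, one_mul, hrec0, map_add, coeff_one,
          if_neg (by positivity : ¬ (j'+1) * K = 0), coeff_C_mul, hn]
        rw [ih j' (by omega) K]
        have hch : Nat.choose (K + j' * K + (j' + 1)) (j' + 1)
            = (K+1) * Nat.choose (K + j' * K + j') j' := by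
          apply Nat.eq_of_mul_eq_mul_right (Nat.succ_pos j')
          calc Nat.choose (K + j' * K + (j' + 1)) (j' + 1) * (j' + 1)
              = ((K + j' * K + j') + 1) * Nat.choose (K + j' * K + j') j' := by
                rw [show K + j' * K + (j'+1) = (K + j' * K + j') + 1 from by ring,
                  Nat.add_one_mul_choose_eq]
            _ = (K + 1) * Nat.choose (K + j' * K + j') j' * (j' + 1) := by ring
        rw [hch]
        have hfact : ((K+1).factorial : ℚ) = ((K:ℚ)+1) * (K.factorial : ℚ) := by
          rw [Nat.factorial_succ]; push_cast; ring
        have h1 : (K.factorial : ℚ) ≠ 0 := Nat.cast_ne_zero.mpr (Nat.factorial_ne_zero K)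
        have h2 : ((K+1).factorial : ℚ) ≠ 0 := Nat.cast_ne_zero.mpr (Nat.factorial_ne_zero (K+1))
        push_cast
        rw [pow_succ, hfact]
        field_simp
        ring
    | succ m ihm =>
      have hidx : m + 1 + j * K = (m + j * K) + 1 := by ring
      rw [hrec m, map_add, hidx, coeff_succ_X_mul, coeff_C_mul, ihm]
      cases j with
      | zero =>
        rw [hvanish _ _ (by omega)]
        norm_num
      | succ j' =>
        rw [show (m + (j'+1) * K + 1 : ℕ) = (m + (K+1)) + j' * K from by ring,
          ih j' (by omega) (m + (K+1))]
        have hpas : Nat.choose ((m + (j'+1) * K + 1 + j') + 1) (j' + 1)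
            = Nat.choose (m + (j'+1) * K + 1 + j') j'
              + Nat.choose (m + (j'+1) * K + 1 + j') (j' + 1) := Nat.choose_succ_succ _ _
        rw [show m + (K+1) + j' * K + j' = m + (j'+1) * K + 1 + j' from by ring,
          show m + (K+1) + j' * K + (j'+1) = (m + (j'+1) * K + 1 + j') + 1 from by ring,
          show m + (j'+1) * K + (j'+1) = m + (j'+1) * K + 1 + j' from by ring,
          hpas]
        have h2 : ((K+1).factorial : ℚ) ≠ 0 := Nat.cast_ne_zero.mpr (Nat.factorial_ne_zero (K+1))
        push_cast
        rw [pow_succ]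
        field_simp
        ring
open Filter

lemma frac_tendsto (K c : ℕ) :
    Tendsto (fun s : ℕ => ((s : ℝ) - c) / ((s : ℝ) * (K + 1) + 1 - c)) atTop
      (nhds (((K : ℝ) + 1))⁻¹) := by
  have h0 : Tendsto (fun s : ℕ => (1 : ℝ) - c / s) atTop (nhds 1) := by
    have := tendsto_const_div_atTop_nhds_zero_nat (c : ℝ)
    have := (tendsto_const_nhds (x := (1:ℝ)) (f := atTop (α := ℕ))).sub this
    simpa using this
  have h1 : Tendsto (fun s : ℕ => ((K : ℝ) + 1) + (1 - c) / s) atTop (nhds ((K : ℝ) + 1)) := by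
    have := tendsto_const_div_atTop_nhds_zero_nat ((1 : ℝ) - c)
    have := (tendsto_const_nhds (x := ((K:ℝ)+1)) (f := atTop (α := ℕ))).add this
    simpa using this
  have h2 := h0.div h1 (by positivity)
  rw [show (1 : ℝ) / ((K:ℝ)+1) = ((K:ℝ)+1)⁻¹ from one_div _] at h2
  apply h2.congr'
  filter_upwards [eventually_ge_atTop 1] with s hs
  have hs0 : (s : ℝ) ≠ 0 := by positivity
  simp only [Pi.div_apply]
  rw [one_sub_div hs0, add_div' _ _ _ hs0, div_div_div_cancel_right₀ hs0]
  congr 1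
  ring

lemma ratio_tendsto (K : ℕ) (c : ℕ) :
    Tendsto (fun s : ℕ => (Nat.choose (s * K + 1 + (s - c)) (s - c) : ℝ)
        / (Nat.choose (s * K + 1 + s) s : ℝ)) atTop
      (nhds ((((K : ℝ) + 1) ^ c)⁻¹)) := by
  induction c with
  | zero =>
    simp only [Nat.sub_zero, pow_zero, inv_one]
    have heq : ∀ s : ℕ, (Nat.choose (s * K + 1 + s) s : ℝ) / (Nat.choose (s * K + 1 + s) s : ℝ) = 1 := by
      intro s
      have h := Nat.choose_pos (show s ≤ s * K + 1 + s by omega)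
      exact div_self (by exact_mod_cast h.ne')
    simpa only [heq] using tendsto_const_nhds
  | succ c ihc =>
    have h := ihc.mul (frac_tendsto K c)
    rw [show (((K:ℝ)+1)^c)⁻¹ * ((K:ℝ)+1)⁻¹ = (((K:ℝ)+1)^(c+1))⁻¹ by
      rw [pow_succ, mul_inv]] at h
    apply h.congr'
    filter_upwards [eventually_ge_atTop (c+1)] with s hs
    have hkey : (s * K + 1 + (s - c)) * Nat.choose (s * K + 1 + (s - (c+1))) (s - (c+1))
        = Nat.choose (s * K + 1 + (s - c)) (s - c) * (s - c) := by
      have h1 := Nat.add_one_mul_choose_eq (s * K + 1 + (s - (c+1))) (s - (c+1))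
      rw [show s * K + 1 + (s - (c+1)) + 1 = s * K + 1 + (s - c) from by omega,
        show s - (c+1) + 1 = s - c from by omega] at h1
      exact h1
    have hA : (0:ℝ) < (s * K + 1 + (s - c) : ℕ) := by positivity
    have hden : (0:ℝ) < (Nat.choose (s * K + 1 + s) s : ℝ) := by
      exact_mod_cast Nat.choose_pos (show s ≤ s * K + 1 + s by omega)
    have hcast : (Nat.choose (s * K + 1 + (s - (c+1))) (s - (c+1)) : ℝ)
        = (Nat.choose (s * K + 1 + (s - c)) (s - c) : ℝ) * ((s:ℝ) - c) / ((s*K+1+(s-c) : ℕ) : ℝ) := by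
      rw [eq_div_iff hA.ne']
      have h3 := congrArg (fun n : ℕ => (n : ℝ)) hkey
      push_cast [Nat.cast_sub (show c ≤ s by omega)] at h3 ⊢
      linarith [h3]
    rw [hcast]
    rw [show ((s*K+1+(s-c) : ℕ) : ℝ) = (s:ℝ) * ((K:ℝ)+1) + 1 - c from by
      rw [Nat.cast_add, Nat.cast_add, Nat.cast_sub (show c ≤ s by omega)]
      push_cast; ring]
    field_simp
open PowerSeries Filter

def phyloC (k : ℕ) : ℕ → ℕ
  | 0 => 0
  | i + 1 => k * phyloC k i + 1

lemma phyloC_spec (K : ℕ) (i : ℕ) : K * phyloC (K+1) i + 1 = (K+1) ^ i := by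
  induction i with
  | zero => simp [phyloC]
  | succ i ih =>
    show K * ((K+1) * phyloC (K+1) i + 1) + 1 = (K+1) ^ (i+1)
    rw [pow_succ, ← ih]
    ring

lemma phyloC_div (K : ℕ) (hK : 1 ≤ K) (i : ℕ) :
    ((K+1) ^ i - 1) / K = phyloC (K+1) i := by
  have h := phyloC_spec K i
  have h2 : (K+1) ^ i - 1 = K * phyloC (K+1) i := by omega
  rw [h2, Nat.mul_div_cancel_left _ (by omega : 0 < K)]

lemma phyloC_mono (K : ℕ) (l : ℕ) : phyloC (K+1) l ≤ phyloC (K+1) (l+1) := by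
  show phyloC (K+1) l ≤ (K+1) * phyloC (K+1) l + 1
  nlinarith [phyloC (K+1) l]

open PowerSeries Filter

/-- Let `k ≥ 2`, `T` the unique power series over `ℚ` with constant coefficient `0`
satisfying `T = X + T^k/k!`, `D = 1 - T^(k-1)/(k-1)!`, and
`Mᵢ = (1/k!^(cᵢ)) · T^(k^i) · D⁻¹` with `cᵢ = (k^i-1)/(k-1)`. Then for every fixed
`i ≥ 0`, the ratio `([X^n] Mᵢ - [X^n] Mᵢ₊₁)/([X^n] M₀)` tends to
`P_{k,i} = 1/k^(cᵢ) - 1/k^(cᵢ₊₁)` as `n → ∞` along integers `n ≡ 1 (mod k-1)`,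
i.e. along `n = s(k-1)+1` as `s → ∞`. -/
theorem phylo_rank_exactly_prob (k : ℕ) (hk : 2 ≤ k) (T : PowerSeries ℚ)
    (hT0 : constantCoeff T = 0)
    (hT : T = X + C ((k.factorial : ℚ))⁻¹ * T ^ k)
    (D : PowerSeries ℚ)
    (hD : D = 1 - C (((k - 1).factorial : ℚ))⁻¹ * T ^ (k - 1))
    (M : ℕ → PowerSeries ℚ)
    (hM : ∀ i : ℕ,
      M i = C (((k.factorial : ℚ) ^ ((k ^ i - 1) / (k - 1)))⁻¹) * T ^ (k ^ i) * D⁻¹)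
    (i : ℕ) :
    Filter.Tendsto
      (fun s : ℕ =>
        (((coeff (s * (k - 1) + 1) (M i) : ℚ) : ℝ) -
            ((coeff (s * (k - 1) + 1) (M (i + 1)) : ℚ) : ℝ)) /
          ((coeff (s * (k - 1) + 1) (M 0) : ℚ) : ℝ))
      Filter.atTop
      (nhds (((k : ℝ) ^ ((k ^ i - 1) / (k - 1)))⁻¹ -
        ((k : ℝ) ^ ((k ^ (i + 1) - 1) / (k - 1)))⁻¹)) := by
  have hmain := phylo_coeff k hk T hT0 hT D hD
  obtain ⟨K, rfl⟩ : ∃ K, k = K + 1 := ⟨k - 1, by omega⟩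
  have hK : 1 ≤ K := by omega
  have hfne : ((K+1).factorial : ℚ) ≠ 0 := Nat.cast_ne_zero.mpr (Nat.factorial_ne_zero _)
  -- key coefficient formula
  have key : ∀ l s : ℕ, phyloC (K+1) l ≤ s →
      coeff (s * K + 1) (M l)
        = (Nat.choose (s * K + 1 + (s - phyloC (K+1) l)) (s - phyloC (K+1) l) : ℚ)
          / ((K+1).factorial : ℚ) ^ s := by
    intro l s hls
    obtain ⟨j, rfl⟩ : ∃ j, s = phyloC (K+1) l + j := ⟨s - phyloC (K+1) l, by omega⟩
    rw [hM l]
    rw [show ((K+1) ^ l - 1) / (K + 1 - 1) = phyloC (K+1) l from by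
      rw [Nat.add_sub_cancel]; exact phyloC_div K hK l]
    rw [mul_assoc, coeff_C_mul]
    rw [show (phyloC (K+1) l + j) * K + 1 = (K+1) ^ l + j * (K + 1 - 1) from by
      rw [Nat.add_sub_cancel, ← phyloC_spec K l]; ring]
    rw [hmain j ((K+1) ^ l)]
    rw [show phyloC (K+1) l + j - phyloC (K+1) l = j from by omega]
    rw [show (K+1) ^ l + j * (K + 1 - 1) + j = (phyloC (K+1) l + j) * K + 1 + j from by
      rw [Nat.add_sub_cancel, ← phyloC_spec K l]; ring]
    rw [pow_add]
    field_simp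
  simp only [Nat.add_sub_cancel] at *
  -- rewrite the limit value
  rw [show ((K+1) ^ i - 1) / K = phyloC (K+1) i from phyloC_div K hK i,
    show ((K+1) ^ (i+1) - 1) / K = phyloC (K+1) (i+1) from phyloC_div K hK (i+1)]
  set c1 := phyloC (K+1) i with hc1
  set c2 := phyloC (K+1) (i+1) with hc2
  have hc12 : c1 ≤ c2 := phyloC_mono K i
  have tend := (ratio_tendsto K c1).sub (ratio_tendsto K c2)
  rw [show ((K:ℝ) + 1) = (((K+1 : ℕ)) : ℝ) from by push_cast; ring] at tend
  apply tend.congr'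
  filter_upwards [eventually_ge_atTop c2] with s hs
  rw [key i s (by omega), key (i+1) s (by omega), key 0 s (by simp [phyloC])]
  rw [show phyloC (K+1) 0 = 0 from rfl, Nat.sub_zero]
  have hd : (0:ℝ) < (Nat.choose (s * K + 1 + s) s : ℝ) := by
    exact_mod_cast Nat.choose_pos (show s ≤ s * K + 1 + s by omega)
  have hfneR : (((K+1).factorial : ℝ)) ^ s ≠ 0 := by positivity
  push_cast
  field_simp
  rfl
end
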